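/- arXiv:1706.00986 — 11 statements merged into one kernel-verified Lean document; each statement's English description precedes it below -/
import Mathlib

section
/- Let H ∈ M_{M×N}(ℂ) be a partial complex Hadamard matrix and let K ∈ M_N(ℂ) be any matrix satisfying K·K* = N·1_N whose first M rows coincide with the rows of H. Then the ℝ-linear map A ↦ E given by E_{ij} = ∑_{k=1}^N H_{ik}·conj(K_{jk})·A_{ik} (for 1 ≤ i ≤ M, 1 ≤ j ≤ N) is a bijection from the real vector space {A ∈ M_{M×N}(ℝ) : ∑_{k=1}^N H_{ik}·conj(H_{jk})·(A_{ik} − A_{jk}) = 0 for all 1 ≤ i,j ≤ M} onto the real vector space {E ∈ M_{M×N}(ℂ) : E_{ij} = conj(E_{ji}) for all 1 ≤ i,j ≤ M, and (EK)_{ij}·conj(H_{ij}) ∈ ℝ for all 1 ≤ i ≤ M, 1 ≤ j ≤ N}, and its inverse is given by A_{ij} = (1/N)·(EK)_{ij}·conj(H_{ij}). -/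
/-- the map `A ↦ E`, `E_{ij} = ∑_k H_{ik} conj(K_{jk}) A_{ik}`, is a bijection
between the defect space of the partial complex Hadamard matrix `H` and the space
`{E : E_{ij} = conj(E_{ji}) for i,j ≤ M, (EK)_{ij} conj(H_{ij}) ∈ ℝ}`, with inverse
`A_{ij} = (1/N) (EK)_{ij} conj(H_{ij})`. -/
theorem stmt_0 (M N : ℕ) (hMN : M ≤ N)
    (H : Matrix (Fin M) (Fin N) ℂ)
    (hmod : ∀ i j, ‖H i j‖ = 1)
    (horth : ∀ i j : Fin M, ∑ k, H i k * star (H j k) = if i = j then (N : ℂ) else 0)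
    (K : Matrix (Fin N) (Fin N) ℂ)
    (hK : K * K.conjTranspose = (N : ℂ) • (1 : Matrix (Fin N) (Fin N) ℂ))
    (hKH : ∀ (i : Fin M) (k : Fin N), K (Fin.castLE hMN i) k = H i k) :
    Set.BijOn
      (fun A : Matrix (Fin M) (Fin N) ℝ =>
        (Matrix.of fun i j => ∑ k, H i k * star (K j k) * (A i k : ℂ) :
          Matrix (Fin M) (Fin N) ℂ))
      {A : Matrix (Fin M) (Fin N) ℝ |
        ∀ i j : Fin M, ∑ k, H i k * star (H j k) * ((A i k : ℂ) - (A j k : ℂ)) = 0}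
      {E : Matrix (Fin M) (Fin N) ℂ |
        (∀ i j : Fin M, E i (Fin.castLE hMN j) = star (E j (Fin.castLE hMN i))) ∧
        (∀ (i : Fin M) (j : Fin N), ∃ r : ℝ, (E * K) i j * star (H i j) = (r : ℂ))} ∧
    (∀ A : Matrix (Fin M) (Fin N) ℝ,
      (∀ i j : Fin M, ∑ k, H i k * star (H j k) * ((A i k : ℂ) - (A j k : ℂ)) = 0) →
      ∀ (i : Fin M) (j : Fin N),
        (A i j : ℂ) = (1 / (N : ℂ)) *
          (((Matrix.of fun i' j' => ∑ k, H i' k * star (K j' k) * (A i' k : ℂ)) * K) i j *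
            star (H i j))) := by
  have hH1 : ∀ (i : Fin M) (j : Fin N), H i j * star (H i j) = 1 := by
    intro i j
    rw [Complex.star_def, Complex.mul_conj, Complex.normSq_eq_norm_sq, hmod]
    norm_num
  have hN : ∀ (_ : Fin M), (N : ℂ) ≠ 0 := by
    intro i
    have h1 : 0 < N := lt_of_lt_of_le i.pos hMN
    exact_mod_cast h1.ne'
  have hKK : K.conjTranspose * K = (N : ℂ) • 1 := by
    rcases Nat.eq_zero_or_pos N with h0 | hpos
    · subst h0; exact Subsingleton.elim _ _
    · have hNne : (N : ℂ) ≠ 0 := by exact_mod_cast hpos.ne'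
      have h1 : K * ((N:ℂ)⁻¹ • K.conjTranspose) = 1 := by
        rw [Matrix.mul_smul, hK, smul_smul, inv_mul_cancel₀ hNne, one_smul]
      have h2 := mul_eq_one_comm.mp h1
      calc K.conjTranspose * K = (N:ℂ) • (((N:ℂ)⁻¹ • K.conjTranspose) * K) := by
            rw [Matrix.smul_mul, smul_smul, mul_inv_cancel₀ hNne, one_smul]
        _ = (N:ℂ) • 1 := by rw [h2]
  have hKKe : ∀ k j : Fin N, ∑ m, star (K m k) * K m j = if k = j then (N:ℂ) else 0 := by
    intro k j
    have h := congrFun (congrFun hKK k) j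
    simpa [Matrix.mul_apply, Matrix.conjTranspose_apply, Matrix.one_apply, Matrix.smul_apply,
      smul_eq_mul, mul_ite, mul_one, mul_zero] using h
  -- key: (f A * K) i j = N * (H i j * A i j)
  have hEK : ∀ (A : Matrix (Fin M) (Fin N) ℝ) (i : Fin M) (j : Fin N),
      ((Matrix.of fun i' j' => ∑ k, H i' k * star (K j' k) * (A i' k : ℂ)) * K) i j
        = (N:ℂ) * (H i j * (A i j : ℂ)) := by
    intro A i j
    rw [Matrix.mul_apply]
    simp only [Matrix.of_apply]
    calc ∑ m, (∑ k, H i k * star (K m k) * (A i k : ℂ)) * K m j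
        = ∑ m, ∑ k, H i k * star (K m k) * (A i k : ℂ) * K m j := by
          simp [Finset.sum_mul]
      _ = ∑ k, ∑ m, H i k * star (K m k) * (A i k : ℂ) * K m j := Finset.sum_comm
      _ = ∑ k, (H i k * (A i k : ℂ)) * ∑ m, star (K m k) * K m j := by
          refine Finset.sum_congr rfl fun k _ => ?_
          rw [Finset.mul_sum]
          refine Finset.sum_congr rfl fun m _ => ?_
          ring
      _ = (N:ℂ) * (H i j * (A i j : ℂ)) := by
          simp only [hKKe, mul_ite, mul_zero, mul_one]
          rw [Finset.sum_ite_eq' Finset.univ j]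
          simp [mul_comm, mul_assoc]
  -- key: ((E K) K*) = N • E entrywise, phrased as a sum
  have hEKE : ∀ (E : Matrix (Fin M) (Fin N) ℂ) (i : Fin M) (m : Fin N),
      ∑ k, (E * K) i k * star (K m k) = (N:ℂ) * E i m := by
    intro E i m
    have h : ((E * K) * K.conjTranspose) i m = (N:ℂ) * E i m := by
      rw [Matrix.mul_assoc, hK, Matrix.mul_smul, Matrix.mul_one]
      simp [Matrix.smul_apply, smul_eq_mul]
    rw [← h, Matrix.mul_apply]
    simp [Matrix.conjTranspose_apply]
  constructor
  · refine ⟨?_, ?_, ?_⟩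
    · -- MapsTo
      intro A hA
      simp only [Set.mem_setOf_eq] at hA ⊢
      constructor
      · intro i j
        simp only [Matrix.of_apply]
        have h' : ∑ k, H i k * star (H j k) * (A i k : ℂ)
            = ∑ k, H i k * star (H j k) * (A j k : ℂ) := by
          rw [← sub_eq_zero, ← Finset.sum_sub_distrib, ← hA i j]
          refine Finset.sum_congr rfl fun k _ => ?_
          ring
        calc ∑ k, H i k * star (K (Fin.castLE hMN j) k) * (A i k : ℂ)
            = ∑ k, H i k * star (H j k) * (A i k : ℂ) := by
              refine Finset.sum_congr rfl fun k _ => ?_; rw [hKH]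
          _ = ∑ k, H i k * star (H j k) * (A j k : ℂ) := h'
          _ = star (∑ k, H j k * star (K (Fin.castLE hMN i) k) * (A j k : ℂ)) := by
              rw [star_sum]
              refine Finset.sum_congr rfl fun k _ => ?_
              rw [hKH]
              simp only [star_mul', star_star, Complex.star_def, Complex.conj_ofReal,
                Complex.conj_conj]
              ring
      · intro i j
        refine ⟨N * A i j, ?_⟩
        rw [hEK A i j]
        push_cast
        calc (N:ℂ) * (H i j * (A i j : ℂ)) * star (H i j)
            = (N:ℂ) * (A i j : ℂ) * (H i j * star (H i j)) := by ring
          _ = (N:ℂ) * (A i j : ℂ) := by rw [hH1, mul_one]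
    · -- InjOn
      intro A hA A' hA' heq
      have heq' : (Matrix.of fun i j => ∑ k, H i k * star (K j k) * ((A i k : ℝ) : ℂ))
          = Matrix.of fun i j => ∑ k, H i k * star (K j k) * ((A' i k : ℝ) : ℂ) := heq
      funext i j
      have h1 : (N:ℂ) * (H i j * (A i j : ℂ)) = (N:ℂ) * (H i j * (A' i j : ℂ)) := by
        rw [← hEK A i j, ← hEK A' i j, heq']
      have hHne : H i j ≠ 0 := by
        intro h
        have hm := hmod i j
        rw [h] at hm
        simp at hm
      have h2 : (A i j : ℂ) = (A' i j : ℂ) :=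
        mul_left_cancel₀ hHne (mul_left_cancel₀ (hN i) h1)
      exact_mod_cast h2
    · -- SurjOn
      intro E hE
      obtain ⟨hE1, hE2⟩ := hE
      set A : Matrix (Fin M) (Fin N) ℝ :=
        Matrix.of fun i j => (N:ℝ)⁻¹ * (hE2 i j).choose with hAdef
      have hAc : ∀ (i : Fin M) (j : Fin N),
          (A i j : ℂ) = (N:ℂ)⁻¹ * ((E * K) i j * star (H i j)) := by
        intro i j
        rw [hAdef]
        simp only [Matrix.of_apply]
        push_cast
        rw [← (hE2 i j).choose_spec]
      have hHA : ∀ (i : Fin M) (k : Fin N), H i k * (A i k : ℂ) = (N:ℂ)⁻¹ * (E * K) i k := by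
        intro i k
        rw [hAc]
        calc H i k * ((N:ℂ)⁻¹ * ((E * K) i k * star (H i k)))
            = (N:ℂ)⁻¹ * (E * K) i k * (H i k * star (H i k)) := by ring
          _ = (N:ℂ)⁻¹ * (E * K) i k := by rw [hH1, mul_one]
      refine ⟨A, ?_, ?_⟩
      · -- defect membership
        intro i j
        have hfst : ∑ k, star (K (Fin.castLE hMN j) k) * (H i k * (A i k : ℂ))
            = E i (Fin.castLE hMN j) := by
          calc ∑ k, star (K (Fin.castLE hMN j) k) * (H i k * (A i k : ℂ))
              = (N:ℂ)⁻¹ * ∑ k, (E * K) i k * star (K (Fin.castLE hMN j) k) := by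
                rw [Finset.mul_sum]
                refine Finset.sum_congr rfl fun k _ => ?_
                rw [hHA i k]; ring
            _ = (N:ℂ)⁻¹ * ((N:ℂ) * E i (Fin.castLE hMN j)) := by rw [hEKE]
            _ = E i (Fin.castLE hMN j) := inv_mul_cancel_left₀ (hN i) _
        have hsnd : ∑ k, H i k * star (H j k * (A j k : ℂ)) = E i (Fin.castLE hMN j) := by
          calc ∑ k, H i k * star (H j k * (A j k : ℂ))
              = star (∑ k, star (H i k) * (H j k * (A j k : ℂ))) := by
                rw [star_sum]
                refine Finset.sum_congr rfl fun k _ => ?_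
                simp only [star_mul', star_star]
            _ = star ((N:ℂ)⁻¹ * ∑ k, (E * K) j k * star (K (Fin.castLE hMN i) k)) := by
                congr 1
                rw [Finset.mul_sum]
                refine Finset.sum_congr rfl fun k _ => ?_
                rw [hHA j k, hKH i k]; ring
            _ = star ((N:ℂ)⁻¹ * ((N:ℂ) * E j (Fin.castLE hMN i))) := by rw [hEKE]
            _ = E i (Fin.castLE hMN j) := by
                rw [inv_mul_cancel_left₀ (hN j)]
                exact (hE1 i j).symm
        calc ∑ k, H i k * star (H j k) * ((A i k : ℂ) - (A j k : ℂ))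
            = ∑ k, (star (K (Fin.castLE hMN j) k) * (H i k * (A i k : ℂ))
                - H i k * star (H j k * (A j k : ℂ))) := by
              refine Finset.sum_congr rfl fun k _ => ?_
              rw [hKH j k, star_mul']
              have hst : star ((A j k : ℝ) : ℂ) = ((A j k : ℝ) : ℂ) := by
                rw [Complex.star_def, Complex.conj_ofReal]
              rw [hst]
              ring
          _ = (∑ k, star (K (Fin.castLE hMN j) k) * (H i k * (A i k : ℂ)))
                - ∑ k, H i k * star (H j k * (A j k : ℂ)) := Finset.sum_sub_distrib _ _
          _ = 0 := by rw [hfst, hsnd, sub_self]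
      · -- f A = E
        simp only
        funext i j
        simp only [Matrix.of_apply]
        calc ∑ k, H i k * star (K j k) * (A i k : ℂ)
            = (N:ℂ)⁻¹ * ∑ k, (E * K) i k * star (K j k) := by
              rw [Finset.mul_sum]
              refine Finset.sum_congr rfl fun k _ => ?_
              rw [mul_comm (H i k) (star (K j k)), mul_assoc, hHA i k]
              ring
          _ = (N:ℂ)⁻¹ * ((N:ℂ) * E i j) := by rw [hEKE]
          _ = E i j := inv_mul_cancel_left₀ (hN i) _
  · -- inverse formula
    intro A hA i j
    rw [hEK A i j]
    have hkey : (1/(N:ℂ)) * ((N:ℂ) * (H i j * (A i j : ℂ)) * star (H i j))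
        = (H i j * star (H i j)) * (((N:ℂ) * (1/(N:ℂ))) * (A i j : ℂ)) := by ring
    rw [hkey, hH1, one_mul, mul_one_div_cancel (hN i), one_mul]
end

section
/- For N ≥ 1, the defect of the Fourier matrix F_N equals ∑_{k=0}^{N−1} gcd(k,N) (where gcd(0,N) = N). Equivalently, this quantity equals the number of pairs (i,j) ∈ (ℤ/Nℤ)² with ij = 0 in ℤ/Nℤ (i.e. the number of entries of F_N equal to 1), and if N = p_1^{a_1}···p_s^{a_s} is the prime factorization of N, it equals N·∏_{i=1}^s (1 + a_i − a_i/p_i). -/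
noncomputable def defectSubmodule {I J : Type*} [Fintype I] [Fintype J]
    (H : Matrix I J ℂ) : Submodule ℝ (Matrix I J ℝ) where
  carrier := {A | ∀ i j, ∑ k, H i k * star (H j k) * ((A i k : ℂ) - (A j k : ℂ)) = 0}
  zero_mem' := by intro i j; simp
  add_mem' := by
    intro A B hA hB i j
    have h : ∀ k ∈ Finset.univ, H i k * star (H j k) * (((A + B) i k : ℂ) - (((A + B) j k : ℝ) : ℂ))
        = H i k * star (H j k) * ((A i k : ℂ) - (A j k : ℂ))
          + H i k * star (H j k) * ((B i k : ℂ) - (B j k : ℂ)) := by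
      intro k _
      simp only [Matrix.add_apply]
      push_cast
      ring
    rw [Finset.sum_congr rfl h, Finset.sum_add_distrib, hA i j, hB i j, add_zero]
  smul_mem' := by
    intro c A hA i j
    have h : ∀ k ∈ Finset.univ, H i k * star (H j k) * (((c • A) i k : ℂ) - (((c • A) j k : ℝ) : ℂ))
        = (c : ℂ) * (H i k * star (H j k) * ((A i k : ℂ) - (A j k : ℂ))) := by
      intro k _
      simp only [Matrix.smul_apply, smul_eq_mul]
      push_cast
      ring
    rw [Finset.sum_congr rfl h, ← Finset.mul_sum, hA i j, mul_zero]

noncomputable def defect {I J : Type*} [Fintype I] [Fintype J] (H : Matrix I J ℂ) : ℕ :=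
  Module.finrank ℝ (defectSubmodule H)

/-- The Fourier matrix `F_N = (w^{ij})` with `w = e^{2πi/N}`. -/
noncomputable def FourierMatrix (N : ℕ) : Matrix (Fin N) (Fin N) ℂ :=
  Matrix.of fun i j => Complex.exp (2 * Real.pi * Complex.I / N) ^ ((i : ℕ) * (j : ℕ))

open Finset
set_option linter.unusedSectionVars false
section
variable (N : ℕ) [NeZero N]
noncomputable def ww : ℂ := Complex.exp (2 * Real.pi * Complex.I / N)
lemma hprim : IsPrimitiveRoot (ww N) N := Complex.isPrimitiveRoot_exp N (NeZero.ne N)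
noncomputable def ee (x : ZMod N) : ℂ := ww N ^ x.val
variable {N}
lemma ee_natCast (t : ℕ) : ee N (t : ZMod N) = ww N ^ t := by
  rw [ee, ZMod.val_natCast]
  conv_rhs => rw [← Nat.div_add_mod t N]
  rw [pow_add, pow_mul, (hprim N).pow_eq_one, one_pow, one_mul]
lemma ee_add (x y : ZMod N) : ee N (x + y) = ee N x * ee N y := by
  have h : ((x.val + y.val : ℕ) : ZMod N) = x + y := by
    push_cast [ZMod.natCast_rightInverse x, ZMod.natCast_rightInverse y]; ring
  rw [← h, ee_natCast, pow_add, ee, ee]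
lemma ee_zero : ee N 0 = 1 := by
  have : ((0:ℕ) : ZMod N) = 0 := by norm_num
  rw [← this, ee_natCast, pow_zero]
lemma ee_eq_one_iff {x : ZMod N} : ee N x = 1 ↔ x = 0 := by
  rw [ee, (hprim N).pow_eq_one_iff_dvd]
  constructor
  · intro h
    have := Nat.eq_zero_of_dvd_of_lt h (x.val_lt)
    · exact (ZMod.val_eq_zero x).mp (by omega)
  · rintro rfl; simp [ZMod.val_zero]
lemma ee_sum (m : ZMod N) : ∑ i : ZMod N, ee N (m * i) = if m = 0 then (N : ℂ) else 0 := by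
  split_ifs with h
  · subst h; simp [ee_zero, ZMod.card]
  · have key : (∑ i : ZMod N, ee N (m * i)) * ee N m = ∑ i : ZMod N, ee N (m * i) := by
      rw [Finset.sum_mul]
      rw [← Equiv.sum_comp (Equiv.addRight (1 : ZMod N)) (fun i => ee N (m * i))]
      apply Finset.sum_congr rfl
      intro i _
      rw [Equiv.coe_addRight, mul_add, ee_add, mul_one]
    have hm : ee N m ≠ 1 := fun hc => h (ee_eq_one_iff.mp hc)
    have h2 : (∑ i : ZMod N, ee N (m * i)) * (ee N m - 1) = 0 := by
      rw [mul_sub, mul_one, key, sub_self]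
    rcases mul_eq_zero.mp h2 with k | k
    · exact k
    · exact absurd (sub_eq_zero.mp k) hm

lemma inv_sum (f : ZMod N → ℂ) (j : ZMod N) :
    ∑ m : ZMod N, ee N (-(j * m)) * ∑ i : ZMod N, ee N (m * i) * f i = (N : ℂ) * f j := by
  have h1 : ∀ m : ZMod N, ee N (-(j * m)) * ∑ i : ZMod N, ee N (m * i) * f i
      = ∑ i : ZMod N, ee N ((i - j) * m) * f i := by
    intro m
    rw [Finset.mul_sum]
    refine Finset.sum_congr rfl fun i _ => ?_
    rw [← mul_assoc, ← ee_add]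
    congr 2
    ring
  simp_rw [h1]
  rw [Finset.sum_comm]
  have h2 : ∀ i : ZMod N, ∑ m : ZMod N, ee N ((i - j) * m) * f i
      = (if i - j = 0 then (N : ℂ) else 0) * f i := by
    intro i
    rw [← Finset.sum_mul, ee_sum]
  simp_rw [h2]
  rw [Finset.sum_eq_single j]
  · simp
  · intro b _ hb
    rw [if_neg (fun hc => hb (by rwa [sub_eq_zero] at hc)), zero_mul]
  · intro h; exact absurd (mem_univ j) h

lemma star_ee (x : ZMod N) : star (ee N x) = ee N (-x) := by
  have h1 : star (ww N) = (ww N)⁻¹ := by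
    rw [ww, Complex.star_def, ← Complex.exp_conj, ← Complex.exp_neg]
    congr 1
    simp [Complex.ext_iff]; ring
  have hwne : ww N ≠ 0 := Complex.exp_ne_zero _
  have h2 : star (ee N x) * ee N x = 1 := by
    rw [ee, star_pow, h1, inv_pow, inv_mul_cancel₀ (pow_ne_zero _ hwne)]
  have h3 : ee N (-x) * ee N x = 1 := by rw [← ee_add, neg_add_cancel, ee_zero]
  have hne : ee N x ≠ 0 := pow_ne_zero _ hwne
  exact mul_right_cancel₀ hne (h2.trans h3.symm)

noncomputable def hatB (B : ZMod N → ZMod N → ℂ) (i d : ZMod N) : ℂ :=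
  ∑ k, ee N (d * k) * B i k
noncomputable def ccB (B : ZMod N → ZMod N → ℂ) (m d : ZMod N) : ℂ :=
  ∑ i, ee N (m * i) * hatB B i d

def condP (B : ZMod N → ZMod N → ℂ) : Prop :=
  ∀ x y : ZMod N, ∑ k, ee N ((x - y) * k) * (B x k - B y k) = 0
def condQ (B : ZMod N → ZMod N → ℂ) : Prop :=
  ∀ m d : ZMod N, m * d ≠ 0 → ccB B m d = 0

lemma sum_sub_hat (B : ZMod N → ZMod N → ℂ) (x y : ZMod N) :
    ∑ k, ee N ((x - y) * k) * (B x k - B y k) = hatB B x (x - y) - hatB B y (x - y) := by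
  rw [hatB, hatB, ← Finset.sum_sub_distrib]
  exact Finset.sum_congr rfl fun k _ => by ring

lemma condP_iff_shift (B : ZMod N → ZMod N → ℂ) :
    condP B ↔ ∀ j d : ZMod N, hatB B (j + d) d = hatB B j d := by
  constructor
  · intro hP j d
    have := hP (j + d) j
    rw [sum_sub_hat, add_sub_cancel_left] at this
    exact sub_eq_zero.mp this
  · intro hs x y
    rw [sum_sub_hat]
    have h2 := hs y (x - y)
    rw [show y + (x - y) = x by ring] at h2
    rw [h2, sub_self]

lemma ccB_shift (B : ZMod N → ZMod N → ℂ) (m d : ZMod N) :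
    ccB B m d = ee N (m * d) * ∑ i, ee N (m * i) * hatB B (i + d) d := by
  rw [ccB, ← Equiv.sum_comp (Equiv.addRight d) (fun i => ee N (m * i) * hatB B i d),
    Finset.mul_sum]
  refine Finset.sum_congr rfl fun i _ => ?_
  rw [Equiv.coe_addRight, ← mul_assoc, ← ee_add]
  congr 2
  ring

lemma Ncast_ne : ((N : ℂ)) ≠ 0 := Nat.cast_ne_zero.mpr (NeZero.ne N)

lemma inv_cc (B : ZMod N → ZMod N → ℂ) (d t : ZMod N) :
    ∑ m, ee N (-(t * m)) * ccB B m d = (N : ℂ) * hatB B t d := by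
  simpa only [ccB] using inv_sum (fun i => hatB B i d) t

lemma condP_iff_condQ (B : ZMod N → ZMod N → ℂ) : condP B ↔ condQ B := by
  rw [condP_iff_shift]
  constructor
  · intro hs m d hmd
    have key : ccB B m d = ee N (m * d) * ccB B m d := by
      conv_lhs => rw [ccB_shift]
      congr 1
      exact Finset.sum_congr rfl fun i _ => by rw [hs i d]
    have h2 : ccB B m d * (1 - ee N (m * d)) = 0 := by
      rw [mul_sub, mul_one, mul_comm (ccB B m d), ← key, sub_self]
    rcases mul_eq_zero.mp h2 with k | k
    · exact k
    · exact absurd (ee_eq_one_iff.mp (by linear_combination -k)) hmd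
  · intro hQ j d
    have hstep : ∀ m, ee N (-(d * m)) * ccB B m d = ccB B m d := by
      intro m
      by_cases h : m * d = 0
      · have : -(d * m) = 0 := by rw [mul_comm]; simp [h]
        rw [this, ee_zero, one_mul]
      · rw [hQ m d h, mul_zero]
    have h1 : (N : ℂ) * hatB B (j + d) d = (N : ℂ) * hatB B j d := by
      rw [← inv_cc, ← inv_cc]
      refine Finset.sum_congr rfl fun m _ => ?_
      have : (-(( j + d) * m)) = -(j * m) + -(d * m) := by ring
      rw [this, ee_add, mul_assoc, hstep]
    exact mul_left_cancel₀ Ncast_ne h1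

variable (N)
def σZ : Fin N ≃ ZMod N where
  toFun i := ((i : ℕ) : ZMod N)
  invFun x := ⟨x.val, x.val_lt⟩
  left_inv i := by
    ext
    simp [ZMod.val_natCast, Nat.mod_eq_of_lt i.isLt]
  right_inv x := by simp [ZMod.natCast_rightInverse x]

variable {N}
lemma fourier_eq (i j : Fin N) : FourierMatrix N i j = ee N (σZ N i * σZ N j) := by
  have : σZ N i * σZ N j = (((i : ℕ) * (j : ℕ) : ℕ) : ZMod N) := by
    push_cast; rfl
  rw [this, ee_natCast]
  rfl

noncomputable def lamT (i j : Fin N) : Matrix (Fin N) (Fin N) ℂ →ₗ[ℂ] ℂ where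
  toFun A := ∑ k, FourierMatrix N i k * star (FourierMatrix N j k) * (A i k - A j k)
  map_add' A B := by
    simp only [Matrix.add_apply]
    rw [← Finset.sum_add_distrib]
    exact Finset.sum_congr rfl fun k _ => by ring
  map_smul' c A := by
    simp only [Matrix.smul_apply, smul_eq_mul, RingHom.id_apply]
    rw [Finset.mul_sum]
    exact Finset.sum_congr rfl fun k _ => by ring

variable (N) in
noncomputable def Tsub : Submodule ℂ (Matrix (Fin N) (Fin N) ℂ) :=
  ⨅ i, ⨅ j, LinearMap.ker (lamT i j)

lemma mem_Tsub {A : Matrix (Fin N) (Fin N) ℂ} : A ∈ Tsub N ↔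
    ∀ i j, ∑ k, FourierMatrix N i k * star (FourierMatrix N j k) * (A i k - A j k) = 0 := by
  simp only [Tsub, Submodule.mem_iInf, LinearMap.mem_ker, lamT, LinearMap.coe_mk, AddHom.coe_mk]

noncomputable def Bfun (A : Matrix (Fin N) (Fin N) ℂ) : ZMod N → ZMod N → ℂ :=
  fun x y => A ((σZ N).symm x) ((σZ N).symm y)

lemma lam_eq (A : Matrix (Fin N) (Fin N) ℂ) (i j : Fin N) :
    ∑ k, FourierMatrix N i k * star (FourierMatrix N j k) * (A i k - A j k)
      = ∑ k' : ZMod N, ee N ((σZ N i - σZ N j) * k') *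
          (Bfun A (σZ N i) k' - Bfun A (σZ N j) k') := by
  rw [← Equiv.sum_comp (σZ N)
    (fun k' => ee N ((σZ N i - σZ N j) * k') * (Bfun A (σZ N i) k' - Bfun A (σZ N j) k'))]
  refine Finset.sum_congr rfl fun k _ => ?_
  rw [fourier_eq, fourier_eq, star_ee, ← ee_add]
  have h1 : σZ N i * σZ N k + -(σZ N j * σZ N k) = (σZ N i - σZ N j) * σZ N k := by ring
  rw [h1]
  congr 2 <;> simp [Bfun]

lemma mem_Tsub_iff_condP {A : Matrix (Fin N) (Fin N) ℂ} : A ∈ Tsub N ↔ condP (Bfun A) := by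
  rw [mem_Tsub]
  constructor
  · intro h x y
    have := h ((σZ N).symm x) ((σZ N).symm y)
    rwa [lam_eq, Equiv.apply_symm_apply, Equiv.apply_symm_apply] at this
  · intro h i j
    rw [lam_eq]
    exact h (σZ N i) (σZ N j)

noncomputable def Gmap : Matrix (Fin N) (Fin N) ℂ →ₗ[ℂ]
    ({p : ZMod N × ZMod N // p.1 * p.2 = 0} → ℂ) where
  toFun A := fun z => ccB (Bfun A) z.1.1 z.1.2
  map_add' A B := by
    funext z
    simp only [ccB, hatB, Bfun, Matrix.add_apply, Pi.add_apply, mul_add, Finset.mul_sum,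
      Finset.sum_add_distrib]
  map_smul' c A := by
    funext z
    simp only [ccB, hatB, Bfun, Matrix.smul_apply, smul_eq_mul, RingHom.id_apply,
      Pi.smul_apply, Finset.mul_sum]
    exact Finset.sum_congr rfl fun i _ => Finset.sum_congr rfl fun k _ => by ring

lemma B_eq_zero (B : ZMod N → ZMod N → ℂ) (hcc : ∀ m d, ccB B m d = 0) : B = 0 := by
  have hhat : ∀ t d, hatB B t d = 0 := by
    intro t d
    have := inv_cc B d t
    simp only [hcc, mul_zero, Finset.sum_const_zero] at this
    have h0 := this.symm
    rcases mul_eq_zero.mp h0 with k | k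
    · exact absurd k Ncast_ne
    · exact k
  funext t k
  have h2 := inv_sum (fun k' => B t k') k
  have h3 : ∀ d : ZMod N, ee N (-(k * d)) * ∑ i : ZMod N, ee N (d * i) * B t i = 0 := by
    intro d
    have := hhat t d
    rw [hatB] at this
    rw [this, mul_zero]
  rw [Finset.sum_congr rfl (fun d _ => h3 d), Finset.sum_const_zero] at h2
  have h0 := h2.symm
  rcases mul_eq_zero.mp h0 with hk | hk
  · exact absurd hk Ncast_ne
  · exact hk

lemma Gmap_inj {A : Matrix (Fin N) (Fin N) ℂ} (hA : A ∈ Tsub N) (h : Gmap A = 0) : A = 0 := by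
  have hQ : condQ (Bfun A) := (condP_iff_condQ _).mp (mem_Tsub_iff_condP.mp hA)
  have hcc : ∀ m d, ccB (Bfun A) m d = 0 := by
    intro m d
    by_cases hmd : m * d = 0
    · have := congrFun h ⟨(m, d), hmd⟩
      simpa [Gmap] using this
    · exact hQ m d hmd
  have hB := B_eq_zero _ hcc
  ext i k
  have : Bfun A (σZ N i) (σZ N k) = 0 := by rw [hB]; rfl
  simpa [Bfun, Equiv.symm_apply_apply] using this

lemma synth_inv (g : ZMod N → ℂ) (d : ZMod N) :
    ∑ k, ee N (d * k) * ((N : ℂ)⁻¹ * ∑ x, ee N (-(k * x)) * g x) = g d := by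
  have hre : ∀ k : ZMod N, ∑ x : ZMod N, ee N (-(k * x)) * g x
      = ∑ x : ZMod N, ee N (k * x) * g (-x) := by
    intro k
    rw [← Equiv.sum_comp (Equiv.neg (ZMod N)) (fun x => ee N (k * x) * g (-x))]
    refine Finset.sum_congr rfl fun x _ => ?_
    simp only [Equiv.neg_apply, neg_neg]
    congr 2
    ring
  have key := inv_sum (fun x => g (-x)) (-d)
  have h2 : ∑ k, ee N (d * k) * ∑ x, ee N (k * x) * g (-x) = (N : ℂ) * g d := by
    simp only [neg_mul, neg_neg] at key
    exact key
  calc ∑ k, ee N (d * k) * ((N : ℂ)⁻¹ * ∑ x, ee N (-(k * x)) * g x)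
      = (N : ℂ)⁻¹ * ∑ k, ee N (d * k) * ∑ x, ee N (k * x) * g (-x) := by
        rw [Finset.mul_sum]
        exact Finset.sum_congr rfl fun k _ => by rw [hre k]; ring
    _ = g d := by rw [h2, ← mul_assoc, inv_mul_cancel₀ Ncast_ne, one_mul]

lemma Gmap_surj (c : {p : ZMod N × ZMod N // p.1 * p.2 = 0} → ℂ) :
    ∃ A ∈ Tsub N, Gmap A = c := by
  classical
  set Cfun : ZMod N → ZMod N → ℂ :=
    fun m d => if h : m * d = 0 then c ⟨(m, d), h⟩ else 0 with hCfun
  set Hc : ZMod N → ZMod N → ℂ :=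
    fun i d => (N : ℂ)⁻¹ * ∑ m, ee N (-(i * m)) * Cfun m d with hHc
  set Bc : ZMod N → ZMod N → ℂ :=
    fun i k => (N : ℂ)⁻¹ * ∑ d, ee N (-(k * d)) * Hc i d with hBc
  have hhat : ∀ i d, hatB Bc i d = Hc i d := fun i d => synth_inv (fun d' => Hc i d') d
  have hcc : ∀ m d, ccB Bc m d = Cfun m d := by
    intro m d
    have : ccB Bc m d = ∑ i, ee N (m * i) * Hc i d := by
      rw [ccB]
      exact Finset.sum_congr rfl fun i _ => by rw [hhat]
    rw [this]
    exact synth_inv (fun m' => Cfun m' d) m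
  refine ⟨Matrix.of (fun i k => Bc (σZ N i) (σZ N k)), ?_, ?_⟩
  · have hBfun : Bfun (Matrix.of fun i k => Bc (σZ N i) (σZ N k)) = Bc := by
      funext x y
      simp [Bfun, Equiv.apply_symm_apply]
    rw [mem_Tsub_iff_condP, condP_iff_condQ, hBfun]
    intro m d hmd
    rw [hcc, hCfun]
    exact dif_neg hmd
  · funext z
    obtain ⟨⟨m, d⟩, hz⟩ := z
    have hBfun : Bfun (Matrix.of fun i k => Bc (σZ N i) (σZ N k)) = Bc := by
      funext x y
      simp [Bfun, Equiv.apply_symm_apply]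
    simp only [Gmap, LinearMap.coe_mk, AddHom.coe_mk, hBfun]
    rw [hcc, hCfun]
    exact dif_pos hz

lemma finrank_Tsub : Module.finrank ℂ (Tsub N) =
    Fintype.card {p : ZMod N × ZMod N // p.1 * p.2 = 0} := by
  classical
  have hbij : Function.Bijective (Gmap.domRestrict (Tsub N)) := by
    constructor
    · intro ⟨A, hA⟩ ⟨B, hB⟩ h
      have : Gmap (A - B) = 0 := by
        rw [map_sub]
        simp only [LinearMap.domRestrict_apply] at h
        rw [h, sub_self]
      have := Gmap_inj (Submodule.sub_mem _ hA hB) this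
      exact Subtype.ext (sub_eq_zero.mp this)
    · intro c
      obtain ⟨A, hA, hGA⟩ := Gmap_surj c
      exact ⟨⟨A, hA⟩, hGA⟩
  have e := LinearEquiv.ofBijective _ hbij
  rw [e.finrank_eq, Module.finrank_fintype_fun_eq_card]

lemma mem_S {X : Matrix (Fin N) (Fin N) ℝ} : X ∈ defectSubmodule (FourierMatrix N) ↔
    ∀ i j, ∑ k, FourierMatrix N i k * star (FourierMatrix N j k) *
      ((X i k : ℂ) - (X j k : ℂ)) = 0 := Iff.rfl

lemma map_ofReal_mem_Tsub {X : Matrix (Fin N) (Fin N) ℝ}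
    (hX : X ∈ defectSubmodule (FourierMatrix N)) :
    X.map (Complex.ofReal) ∈ Tsub N := by
  rw [mem_Tsub]
  intro i j
  have := mem_S.mp hX i j
  simpa [Matrix.map_apply] using this

lemma star_mem_Tsub {A : Matrix (Fin N) (Fin N) ℂ} (hA : A ∈ Tsub N) :
    A.map star ∈ Tsub N := by
  rw [mem_Tsub] at hA ⊢
  intro i j
  have h0 := congrArg star (hA j i)
  rw [star_zero, star_sum] at h0
  have h2 : ∀ k ∈ Finset.univ, FourierMatrix N i k * star (FourierMatrix N j k) *
      ((A.map star) i k - (A.map star) j k)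
      = -(star (FourierMatrix N j k * star (FourierMatrix N i k) * (A j k - A i k))) := by
    intro k _
    simp only [Matrix.map_apply, star_mul, star_star, star_sub]
    ring
  rw [Finset.sum_congr rfl h2, Finset.sum_neg_distrib, h0, neg_zero]

lemma re_mem_S {A : Matrix (Fin N) (Fin N) ℂ} (hA : A ∈ Tsub N) :
    (Matrix.of fun i j => (A i j).re) ∈ defectSubmodule (FourierMatrix N) := by
  rw [mem_S]
  intro i j
  have h1 := mem_Tsub.mp hA i j
  have h2 := mem_Tsub.mp (star_mem_Tsub hA) i j
  simp only [Matrix.map_apply] at h2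
  have hterm : ∀ k ∈ Finset.univ, FourierMatrix N i k * star (FourierMatrix N j k) *
      (((Matrix.of fun i j => (A i j).re) i k : ℂ) - ((Matrix.of fun i j => (A i j).re) j k : ℂ))
      = (FourierMatrix N i k * star (FourierMatrix N j k) * (A i k - A j k)
        + FourierMatrix N i k * star (FourierMatrix N j k) * (star (A i k) - star (A j k))) / 2 := by
    intro k _
    have hz := Complex.add_conj (A i k)
    have hw := Complex.add_conj (A j k)
    rw [← Complex.star_def] at hz hw
    push_cast at hz hw
    simp only [Matrix.of_apply]
    linear_combination (-(FourierMatrix N i k * star (FourierMatrix N j k)) / 2) * hz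
      + (FourierMatrix N i k * star (FourierMatrix N j k) / 2) * hw
  rw [Finset.sum_congr rfl hterm, ← Finset.sum_div, Finset.sum_add_distrib, h1, h2]
  norm_num

lemma im_mem_S {A : Matrix (Fin N) (Fin N) ℂ} (hA : A ∈ Tsub N) :
    (Matrix.of fun i j => (A i j).im) ∈ defectSubmodule (FourierMatrix N) := by
  rw [mem_S]
  intro i j
  have h1 := mem_Tsub.mp hA i j
  have h2 := mem_Tsub.mp (star_mem_Tsub hA) i j
  simp only [Matrix.map_apply] at h2
  have hterm : ∀ k ∈ Finset.univ, (2 * Complex.I) *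
      (FourierMatrix N i k * star (FourierMatrix N j k) *
      (((Matrix.of fun i j => (A i j).im) i k : ℂ) - ((Matrix.of fun i j => (A i j).im) j k : ℂ)))
      = (FourierMatrix N i k * star (FourierMatrix N j k) * (A i k - A j k)
        - FourierMatrix N i k * star (FourierMatrix N j k) * (star (A i k) - star (A j k))) := by
    intro k _
    have hz := Complex.sub_conj (A i k)
    have hw := Complex.sub_conj (A j k)
    rw [← Complex.star_def] at hz hw
    push_cast at hz hw
    simp only [Matrix.of_apply]
    linear_combination (-(FourierMatrix N i k * star (FourierMatrix N j k))) * hz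
      + (FourierMatrix N i k * star (FourierMatrix N j k)) * hw
  have hsum : (2 * Complex.I) * ∑ k, FourierMatrix N i k * star (FourierMatrix N j k) *
      (((Matrix.of fun i j => (A i j).im) i k : ℂ) - ((Matrix.of fun i j => (A i j).im) j k : ℂ))
      = 0 := by
    rw [Finset.mul_sum, Finset.sum_congr rfl hterm, Finset.sum_sub_distrib, h1, h2, sub_zero]
  rcases mul_eq_zero.mp hsum with h | h
  · exact absurd h (by simp [Complex.I_ne_zero])
  · exact h

noncomputable def phiST : (defectSubmodule (FourierMatrix N) × defectSubmodule (FourierMatrix N))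
    →ₗ[ℝ] (Tsub N).restrictScalars ℝ where
  toFun p := ⟨(p.1 : Matrix (Fin N) (Fin N) ℝ).map Complex.ofReal
      + Complex.I • (p.2 : Matrix (Fin N) (Fin N) ℝ).map Complex.ofReal,
    Submodule.add_mem _ (map_ofReal_mem_Tsub p.1.2)
      (Submodule.smul_mem _ _ (map_ofReal_mem_Tsub p.2.2))⟩
  map_add' p q := by
    apply Subtype.ext
    simp only [Submodule.coe_add, Prod.fst_add, Prod.snd_add]
    ext i j
    simp only [Matrix.add_apply, Matrix.map_apply, Matrix.smul_apply, smul_eq_mul]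
    push_cast
    ring
  map_smul' c p := by
    apply Subtype.ext
    simp only [RingHom.id_apply, SetLike.val_smul, Prod.smul_fst, Prod.smul_snd]
    ext i j
    simp only [Matrix.add_apply, Matrix.map_apply, Matrix.smul_apply, smul_eq_mul,
      Complex.real_smul]
    push_cast
    ring

noncomputable def psiST : ((Tsub N).restrictScalars ℝ) →ₗ[ℝ]
    (defectSubmodule (FourierMatrix N) × defectSubmodule (FourierMatrix N)) where
  toFun a := (⟨Matrix.of fun i j => ((a : Matrix (Fin N) (Fin N) ℂ) i j).re, re_mem_S a.2⟩,
    ⟨Matrix.of fun i j => ((a : Matrix (Fin N) (Fin N) ℂ) i j).im, im_mem_S a.2⟩)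
  map_add' a b := by
    apply Prod.ext <;> apply Subtype.ext <;> ext i j <;>
      simp [Matrix.add_apply]
  map_smul' c a := by
    apply Prod.ext <;> apply Subtype.ext <;> ext i j <;>
      simp [Matrix.smul_apply, Complex.real_smul]

noncomputable def eST : (defectSubmodule (FourierMatrix N) × defectSubmodule (FourierMatrix N))
    ≃ₗ[ℝ] (Tsub N).restrictScalars ℝ := by
  refine LinearEquiv.ofLinear phiST psiST ?_ ?_
  · apply LinearMap.ext
    intro a
    apply Subtype.ext
    ext i j
    simp only [LinearMap.comp_apply, LinearMap.id_apply, phiST, psiST, LinearMap.coe_mk,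
      AddHom.coe_mk, Matrix.add_apply, Matrix.map_apply, Matrix.smul_apply, Matrix.of_apply,
      smul_eq_mul]
    have := Complex.re_add_im ((a : Matrix (Fin N) (Fin N) ℂ) i j)
    linear_combination this
  · apply LinearMap.ext
    intro p
    apply Prod.ext <;> apply Subtype.ext <;> ext i j <;>
      simp [phiST, psiST, Matrix.add_apply, Matrix.map_apply, Matrix.smul_apply]

lemma defect_eq_card : defect (FourierMatrix N) =
    Fintype.card {p : ZMod N × ZMod N // p.1 * p.2 = 0} := by
  have h1 := (eST (N := N)).finrank_eq
  rw [Module.finrank_prod] at h1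
  have h2 := ((Submodule.restrictScalarsEquiv (S := ℝ) (R := ℂ)
    (M := Matrix (Fin N) (Fin N) ℂ) (Tsub N)).restrictScalars ℝ).finrank_eq
  have h3 := Module.finrank_mul_finrank ℝ ℂ (Tsub N)
  rw [Complex.finrank_real_complex] at h3
  have h4 := finrank_Tsub (N := N)
  have : defect (FourierMatrix N) = Module.finrank ℝ (defectSubmodule (FourierMatrix N)) := rfl
  omega

lemma dvd_iff_aux (a b : ℕ) : N ∣ a * b ↔ (N / Nat.gcd a N) ∣ b := by
  set g := Nat.gcd a N with hg
  have hgN : g ∣ N := Nat.gcd_dvd_right a N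
  have hga : g ∣ a := Nat.gcd_dvd_left a N
  have hNpos : 0 < N := Nat.pos_of_ne_zero (NeZero.ne N)
  have hgpos : 0 < g := Nat.gcd_pos_of_pos_right a hNpos
  have hcop : Nat.Coprime (a / g) (N / g) := Nat.coprime_div_gcd_div_gcd hgpos
  have hN : g * (N / g) = N := Nat.mul_div_cancel' hgN
  have ha : g * (a / g) = a := Nat.mul_div_cancel' hga
  constructor
  · intro h
    have h1 : g * (N / g) ∣ g * ((a / g) * b) := by
      rw [hN, ← mul_assoc, ha]
      exact h
    have h2 : (N / g) ∣ (a / g) * b := (Nat.mul_dvd_mul_iff_left hgpos).mp h1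
    exact (Nat.Coprime.dvd_of_dvd_mul_left hcop.symm h2)
  · intro h
    obtain ⟨c, rfl⟩ := h
    have h1 : N ∣ a * (N / g) := by
      conv_lhs => rw [← hN]
      exact mul_dvd_mul hga dvd_rfl
    exact dvd_trans h1 ⟨c, by ring⟩

lemma count_eq (x : ZMod N) :
    (Finset.univ.filter fun y : ZMod N => x * y = 0).card = Nat.gcd x.val N := by
  classical
  set a := x.val with ha
  set g := Nat.gcd a N with hg
  set n' := N / g with hn'
  have hNpos : 0 < N := Nat.pos_of_ne_zero (NeZero.ne N)
  have hgpos : 0 < g := Nat.gcd_pos_of_pos_right a hNpos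
  have hgN : g ∣ N := Nat.gcd_dvd_right a N
  have hN : g * n' = N := Nat.mul_div_cancel' hgN
  have hn'pos : 0 < n' := by
    rcases Nat.eq_zero_or_pos n' with h | h
    · rw [h, mul_zero] at hN; omega
    · exact h
  have hpred : ∀ y : ZMod N, (x * y = 0) ↔ n' ∣ y.val := by
    intro y
    have h1 : x * y = ((a * y.val : ℕ) : ZMod N) := by
      rw [ha]
      push_cast [ZMod.natCast_rightInverse x, ZMod.natCast_rightInverse y]
      ring
    rw [h1, ZMod.natCast_eq_zero_iff]
    exact dvd_iff_aux a y.val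
  have hfilter : (Finset.univ.filter fun y : ZMod N => x * y = 0)
      = Finset.image (fun j : ℕ => ((j * n' : ℕ) : ZMod N)) (Finset.range g) := by
    apply Finset.ext
    intro y
    simp only [Finset.mem_filter, Finset.mem_univ, true_and, Finset.mem_image, Finset.mem_range]
    rw [hpred y]
    constructor
    · intro hd
      refine ⟨y.val / n', ?_, ?_⟩
      · have hlt : y.val < N := y.val_lt
        have : y.val / n' < g := by
          apply Nat.div_lt_of_lt_mul
          rw [mul_comm]
          omega
        exact this
      · rw [Nat.div_mul_cancel hd]
        exact ZMod.natCast_rightInverse y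
    · rintro ⟨j, hj, rfl⟩
      rw [ZMod.val_natCast]
      exact Nat.dvd_mod_iff (by rw [← hN]; exact Dvd.intro_left g rfl) |>.mpr ⟨j, mul_comm _ _⟩
  rw [hfilter, Finset.card_image_of_injOn, Finset.card_range]
  intro j1 h1 j2 h2 heq
  simp only [Finset.coe_range, Set.mem_Iio] at h1 h2
  have hlt1 : j1 * n' < N := by calc j1 * n' < g * n' := (Nat.mul_lt_mul_right hn'pos).mpr h1
                                   _ = N := hN
  have hlt2 : j2 * n' < N := by calc j2 * n' < g * n' := (Nat.mul_lt_mul_right hn'pos).mpr h2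
                                   _ = N := hN
  have := congrArg ZMod.val heq
  rw [ZMod.val_natCast, ZMod.val_natCast, Nat.mod_eq_of_lt hlt1, Nat.mod_eq_of_lt hlt2] at this
  exact Nat.eq_of_mul_eq_mul_right hn'pos this

lemma card_Z : Fintype.card {p : ZMod N × ZMod N // p.1 * p.2 = 0}
    = ∑ k ∈ Finset.range N, Nat.gcd k N := by
  classical
  rw [Fintype.card_subtype]
  have hsplit : (Finset.univ.filter fun p : ZMod N × ZMod N => p.1 * p.2 = 0).card
      = ∑ x : ZMod N, (Finset.univ.filter fun y : ZMod N => x * y = 0).card := by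
    rw [Finset.card_filter, ← Finset.univ_product_univ, Finset.sum_product]
    refine Finset.sum_congr rfl fun x _ => ?_
    rw [Finset.card_filter]
  rw [hsplit]
  have h3 : ∀ i : Fin N, Nat.gcd ((σZ N i).val) N = Nat.gcd (i : ℕ) N := by
    intro i
    congr 1
    simp [σZ, ZMod.val_natCast, Nat.mod_eq_of_lt i.isLt]
  calc ∑ x : ZMod N, (Finset.univ.filter fun y : ZMod N => x * y = 0).card
      = ∑ x : ZMod N, Nat.gcd x.val N := Finset.sum_congr rfl fun x _ => count_eq x
    _ = ∑ i : Fin N, Nat.gcd ((σZ N i).val) N :=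
        (Equiv.sum_comp (σZ N) (fun x : ZMod N => Nat.gcd x.val N)).symm
    _ = ∑ i : Fin N, Nat.gcd (i : ℕ) N := Finset.sum_congr rfl fun i _ => h3 i
    _ = ∑ k ∈ Finset.range N, Nat.gcd k N := Fin.sum_univ_eq_sum_range (fun k => Nat.gcd k N) N

end

section NT

lemma card_multiples' {d n : ℕ} (hd : d ∣ n) (hn : n ≠ 0) :
    ((Finset.range n).filter (d ∣ ·)).card = n / d := by
  have hd0 : d ≠ 0 := by rintro rfl; exact hn (Nat.eq_zero_of_zero_dvd hd)
  have himg : (Finset.range n).filter (d ∣ ·) = Finset.image (· * d) (Finset.range (n / d)) := by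
    ext k
    simp only [Finset.mem_filter, Finset.mem_range, Finset.mem_image]
    constructor
    · rintro ⟨hk, j, rfl⟩
      have hlt : d * j < d * (n / d) := by rwa [Nat.mul_div_cancel' hd]
      exact ⟨j, lt_of_mul_lt_mul_left hlt (Nat.zero_le d), mul_comm j d⟩
    · rintro ⟨j, hj, rfl⟩
      constructor
      · calc j * d < (n / d) * d := (Nat.mul_lt_mul_right (Nat.pos_of_ne_zero hd0)).mpr hj
          _ = n := Nat.div_mul_cancel hd
      · exact ⟨j, mul_comm j d⟩
  rw [himg, Finset.card_image_of_injective _ fun a b h => Nat.eq_of_mul_eq_mul_right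
    (Nat.pos_of_ne_zero hd0) h, Finset.card_range]


lemma gcd_sum_eq_divisors {n : ℕ} (hn : n ≠ 0) :
    ∑ k ∈ Finset.range n, Nat.gcd k n = ∑ d ∈ n.divisors, Nat.totient d * (n / d) := by
  have hgcddiv : ∀ k, (Nat.gcd k n).divisors = n.divisors.filter (· ∣ k) := by
    intro k
    ext d
    simp only [Nat.mem_divisors, Finset.mem_filter]
    constructor
    · rintro ⟨hd, hne⟩
      exact ⟨⟨(Nat.dvd_gcd_iff.mp hd).2, hn⟩, (Nat.dvd_gcd_iff.mp hd).1⟩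
    · rintro ⟨⟨hdn, _⟩, hdk⟩
      exact ⟨Nat.dvd_gcd hdk hdn, fun hc => hn (Nat.eq_zero_of_gcd_eq_zero_right hc)⟩
  calc ∑ k ∈ Finset.range n, Nat.gcd k n
      = ∑ k ∈ Finset.range n, ∑ d ∈ (Nat.gcd k n).divisors, Nat.totient d := by
        exact Finset.sum_congr rfl fun k _ => (Nat.sum_totient _).symm
    _ = ∑ k ∈ Finset.range n, ∑ d ∈ n.divisors, if d ∣ k then Nat.totient d else 0 := by
        refine Finset.sum_congr rfl fun k _ => ?_
        rw [hgcddiv k, Finset.sum_filter]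
    _ = ∑ d ∈ n.divisors, ∑ k ∈ Finset.range n, if d ∣ k then Nat.totient d else 0 :=
        Finset.sum_comm
    _ = ∑ d ∈ n.divisors, Nat.totient d * (n / d) := by
        refine Finset.sum_congr rfl fun d hd => ?_
        rw [← Finset.sum_filter, Finset.sum_const, smul_eq_mul,
          card_multiples' (Nat.mem_divisors.mp hd).1 hn, mul_comm]

noncomputable def phiA : ArithmeticFunction ℕ := ⟨Nat.totient, Nat.totient_zero⟩

lemma phiA_mult : phiA.IsMultiplicative := by
  constructor
  · simp [phiA]
  · intro m n h
    exact Nat.totient_mul h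

noncomputable def FA : ArithmeticFunction ℕ := phiA * ArithmeticFunction.id

lemma FA_mult : FA.IsMultiplicative := phiA_mult.mul ArithmeticFunction.isMultiplicative_id

lemma FA_apply {n : ℕ} : FA n = ∑ d ∈ n.divisors, Nat.totient d * (n / d) := by
  rw [FA, ArithmeticFunction.mul_apply]
  rw [← Nat.sum_divisorsAntidiagonal (fun a b => Nat.totient a * b)]
  rfl

lemma gcd_sum_eq_FA {n : ℕ} (hn : n ≠ 0) : ∑ k ∈ Finset.range n, Nat.gcd k n = FA n := by
  rw [FA_apply, gcd_sum_eq_divisors hn]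

lemma FA_prime_pow {p a : ℕ} (hp : p.Prime) :
    FA (p ^ a) = p ^ a + a * (p ^ (a - 1) * (p - 1)) := by
  rw [FA_apply, Nat.sum_divisors_prime_pow hp, Finset.sum_range_succ']
  have h0 : Nat.totient (p ^ 0) * (p ^ a / p ^ 0) = p ^ a := by simp
  have hj : ∀ j ∈ Finset.range a, Nat.totient (p ^ (j + 1)) * (p ^ a / p ^ (j + 1))
      = p ^ (a - 1) * (p - 1) := by
    intro j hj
    rw [Finset.mem_range] at hj
    rw [Nat.totient_prime_pow hp (Nat.succ_pos j), Nat.pow_div (by omega) hp.pos]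
    have h2 : p ^ (j.succ - 1) * (p - 1) * p ^ (a - (j + 1))
        = p ^ (j.succ - 1) * p ^ (a - (j + 1)) * (p - 1) := by ring
    rw [h2, ← pow_add]
    congr 2
    omega
  rw [Finset.sum_congr rfl hj, h0, Finset.sum_const, Finset.card_range, smul_eq_mul]
  omega


lemma FA_pp_rat {p : ℕ} (hp : p.Prime) (a : ℕ) :
    ((FA (p ^ a) : ℕ) : ℚ)
      = (p : ℚ) ^ a * (1 + (a : ℚ) - (a : ℚ) / (p : ℚ)) := by
  have hp0 : (p : ℚ) ≠ 0 := Nat.cast_ne_zero.mpr hp.pos.ne'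
  rw [FA_prime_pow hp]
  rcases a with _ | b
  · simp
  · have h1 : (1 : ℕ) ≤ p := hp.one_lt.le
    push_cast [Nat.cast_sub h1]
    field_simp
    ring

lemma stmt3_NT {N : ℕ} (hN : N ≠ 0) :
    ((∑ k ∈ Finset.range N, Nat.gcd k N : ℕ) : ℚ)
      = (N : ℚ) * ∏ p ∈ N.primeFactors,
          (1 + (N.factorization p : ℚ) - (N.factorization p : ℚ) / (p : ℚ)) := by
  rw [gcd_sum_eq_FA hN]
  have hfac := ArithmeticFunction.IsMultiplicative.multiplicative_factorization FA FA_mult hN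
  rw [hfac, Finsupp.prod, Nat.support_factorization, Nat.cast_prod]
  have hterm : ∀ p ∈ N.primeFactors, ((FA (p ^ N.factorization p) : ℕ) : ℚ)
      = (p : ℚ) ^ (N.factorization p)
        * (1 + (N.factorization p : ℚ) - (N.factorization p : ℚ) / (p : ℚ)) := by
    intro p hp
    exact FA_pp_rat (Nat.prime_of_mem_primeFactors hp) _
  rw [Finset.prod_congr rfl hterm, Finset.prod_mul_distrib]
  congr 1
  conv_rhs => rw [← Nat.factorization_prod_pow_eq_self hN]
  rw [Finsupp.prod, Nat.support_factorization, Nat.cast_prod]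
  push_cast
  rfl

end NT

/-- the defect of the Fourier matrix `F_N` equals `∑_{k=0}^{N−1} gcd(k,N)`,
equals the number of pairs `(i,j) ∈ (ℤ/N)²` with `ij = 0` (the number of 1 entries of
`F_N`), and equals `N ∏_i (1 + a_i − a_i/p_i)` for `N = ∏ p_i^{a_i}`. -/
theorem stmt_4 (N : ℕ) [NeZero N] :
    defect (FourierMatrix N) = ∑ k ∈ Finset.range N, Nat.gcd k N ∧
    defect (FourierMatrix N) = Fintype.card {p : ZMod N × ZMod N // p.1 * p.2 = 0} ∧
    (defect (FourierMatrix N) : ℚ) =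
      (N : ℚ) * ∏ p ∈ N.primeFactors,
        (1 + (N.factorization p : ℚ) - (N.factorization p : ℚ) / (p : ℚ)) := by
  have h2 : defect (FourierMatrix N) = Fintype.card {p : ZMod N × ZMod N // p.1 * p.2 = 0} :=
    defect_eq_card
  have h1 : defect (FourierMatrix N) = ∑ k ∈ Finset.range N, Nat.gcd k N := by
    rw [h2, card_Z]
  refine ⟨h1, h2, ?_⟩
  rw [h1]
  exact stmt3_NT (NeZero.ne N)
end

section
/- Let K ∈ M_M(ℂ) and L ∈ M_N(ℂ) be complex Hadamard matrices, and let K⊗L ∈ M_{MN}(ℂ) be their Kronecker product, (K⊗L)_{(i,a),(j,b)} = K_{ij}·L_{ab}. Then K⊗L is a complex Hadamard matrix and its defect satisfies d(K⊗L) ≥ d(K)·d(L). -/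
open scoped Kronecker

lemma kron_mem_defect {M N : ℕ} {K : Matrix (Fin M) (Fin M) ℂ} {L : Matrix (Fin N) (Fin N) ℂ}
    {A : Matrix (Fin M) (Fin M) ℝ} {B : Matrix (Fin N) (Fin N) ℝ}
    (hA : A ∈ defectSubmodule K) (hB : B ∈ defectSubmodule L) :
    (A ⊗ₖ B) ∈ defectSubmodule (K ⊗ₖ L) := by
  rintro ⟨i, a⟩ ⟨j, b⟩
  have key : ∀ z : Fin M × Fin N,
      (K ⊗ₖ L) (i, a) z * star ((K ⊗ₖ L) (j, b) z) *
        ((((A ⊗ₖ B) (i, a) z : ℝ) : ℂ) - (((A ⊗ₖ B) (j, b) z : ℝ) : ℂ))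
      = (K i z.1 * star (K j z.1) * ((A i z.1 : ℂ) - (A j z.1 : ℂ)))
          * (L a z.2 * star (L b z.2) * (B a z.2 : ℂ))
        + (K i z.1 * star (K j z.1) * (A j z.1 : ℂ))
          * (L a z.2 * star (L b z.2) * ((B a z.2 : ℂ) - (B b z.2 : ℂ))) := by
    rintro ⟨k, l⟩
    simp only [Matrix.kroneckerMap_apply, star_mul']
    push_cast
    ring
  rw [Finset.sum_congr rfl fun z _ => key z, Finset.sum_add_distrib]
  rw [Fintype.sum_prod_type, Fintype.sum_prod_type]
  simp only [← Finset.sum_mul, ← Finset.mul_sum]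
  rw [show (∑ k, K i k * star (K j k) * ((A i k : ℂ) - (A j k : ℂ))) = 0 from hA i j]
  have h2 : ∀ k : Fin M, (∑ l, L a l * star (L b l) * ((B a l : ℂ) - (B b l : ℂ))) = 0 :=
    fun _ => hB a b
  simp only [h2, mul_zero, Finset.sum_const_zero, add_zero, zero_mul, Finset.mul_sum]
  rw [zero_add, ← Finset.mul_sum,
    show (∑ l, L a l * star (L b l) * ((B a l : ℝ) - (B b l : ℝ) : ℂ)) = 0 from hB a b, mul_zero]

lemma kron_linearIndependent {M N : ℕ} {ιA ιB : Type*} [Fintype ιA] [Fintype ιB]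
    {fA : ιA → Matrix (Fin M) (Fin M) ℝ} {fB : ιB → Matrix (Fin N) (Fin N) ℝ}
    (hfA : LinearIndependent ℝ fA) (hfB : LinearIndependent ℝ fB) :
    LinearIndependent ℝ (fun pq : ιA × ιB => (fA pq.1) ⊗ₖ (fB pq.2)) := by
  rw [Fintype.linearIndependent_iff] at hfA hfB ⊢
  intro c hc pq
  have hc' : ∀ (i j : Fin M) (a b : Fin N),
      ∑ p, ∑ q, c (p, q) * (fA p i j * fB q a b) = 0 := by
    intro i j a b
    have := congrArg (fun X : Matrix (Fin M × Fin N) (Fin M × Fin N) ℝ => X (i, a) (j, b)) hc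
    simpa [Matrix.sum_apply, Fintype.sum_prod_type] using this
  have step1 : ∀ (i : Fin M) (j : Fin M) (q : ιB), ∑ p, c (p, q) * fA p i j = 0 := by
    intro i j q
    refine hfB (fun q => ∑ p, c (p, q) * fA p i j) ?_ q
    ext a b
    have := hc' i j a b
    simp only [Matrix.sum_apply, Matrix.smul_apply, smul_eq_mul, Matrix.zero_apply,
      Finset.sum_mul]
    rw [Finset.sum_comm] at this
    rw [← this]
    apply Finset.sum_congr rfl
    intro q' _
    apply Finset.sum_congr rfl
    intro p _
    ring
  have step2 : ∀ q : ιB, ∀ p : ιA, c (p, q) = 0 := by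
    intro q
    refine hfA (fun p => c (p, q)) ?_
    ext i j
    simpa [Matrix.sum_apply] using step1 i j q
  exact step2 pq.2 pq.1

/-- the Kronecker product of two complex Hadamard matrices is a complex
Hadamard matrix, and its defect satisfies `d(K ⊗ L) ≥ d(K)·d(L)`. -/
theorem stmt_8 (M N : ℕ)
    (K : Matrix (Fin M) (Fin M) ℂ) (L : Matrix (Fin N) (Fin N) ℂ)
    (hKmod : ∀ i j, ‖K i j‖ = 1)
    (hKorth : ∀ i j : Fin M, ∑ k, K i k * star (K j k) = if i = j then (M : ℂ) else 0)
    (hLmod : ∀ i j, ‖L i j‖ = 1)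
    (hLorth : ∀ i j : Fin N, ∑ k, L i k * star (L j k) = if i = j then (N : ℂ) else 0) :
    (∀ x y : Fin M × Fin N, ‖(K ⊗ₖ L) x y‖ = 1) ∧
    (∀ x y : Fin M × Fin N,
      ∑ z : Fin M × Fin N, (K ⊗ₖ L) x z * star ((K ⊗ₖ L) y z) =
        if x = y then ((M * N : ℕ) : ℂ) else 0) ∧
    defect K * defect L ≤ defect (K ⊗ₖ L) := by
  refine ⟨?_, ?_, ?_⟩
  · rintro ⟨i, a⟩ ⟨j, b⟩
    simp [Matrix.kroneckerMap_apply, map_mul, hKmod, hLmod]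
  · rintro ⟨i, a⟩ ⟨j, b⟩
    have key : ∀ z : Fin M × Fin N,
        (K ⊗ₖ L) (i, a) z * star ((K ⊗ₖ L) (j, b) z)
          = (K i z.1 * star (K j z.1)) * (L a z.2 * star (L b z.2)) := by
      rintro ⟨k, l⟩
      simp only [Matrix.kroneckerMap_apply, star_mul']
      ring
    rw [Finset.sum_congr rfl fun z _ => key z, Fintype.sum_prod_type]
    simp only [← Finset.sum_mul, ← Finset.mul_sum]
    rw [hKorth i j, hLorth a b]
    by_cases hij : i = j <;> by_cases hab : a = b <;>
      simp [hij, hab, Prod.ext_iff]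
  · haveI : Module.Finite ℝ (defectSubmodule (K ⊗ₖ L)) := inferInstance
    set bA := Module.finBasis ℝ (defectSubmodule K)
    set bB := Module.finBasis ℝ (defectSubmodule L)
    have hA : LinearIndependent ℝ (fun p => ((bA p : defectSubmodule K) : Matrix (Fin M) (Fin M) ℝ)) :=
      bA.linearIndependent.map' (Submodule.subtype _) (Submodule.ker_subtype _)
    have hB : LinearIndependent ℝ (fun q => ((bB q : defectSubmodule L) : Matrix (Fin N) (Fin N) ℝ)) :=
      bB.linearIndependent.map' (Submodule.subtype _) (Submodule.ker_subtype _)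
    have hind := kron_linearIndependent hA hB
    set F : Fin (Module.finrank ℝ (defectSubmodule K)) × Fin (Module.finrank ℝ (defectSubmodule L))
        → defectSubmodule (K ⊗ₖ L) :=
      fun pq => ⟨(bA pq.1 : Matrix (Fin M) (Fin M) ℝ) ⊗ₖ (bB pq.2 : Matrix (Fin N) (Fin N) ℝ),
        kron_mem_defect (bA pq.1).2 (bB pq.2).2⟩ with hF
    have hindF : LinearIndependent ℝ F := by
      apply LinearIndependent.of_comp (Submodule.subtype _)
      exact hind
    have := hindF.fintype_card_le_finrank
    simpa [defect, Fintype.card_prod] using this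
end

section
/- Let M, N ≥ 1 and consider the Kronecker product F_M ⊗ F_N of the Fourier matrices F_M and F_N, which is a complex Hadamard matrix of size MN. Then d(F_M ⊗ F_N) = d(F_M)·d(F_N) if and only if gcd(M,N) = 1. -/
open Module Finset
set_option linter.unusedSectionVars false


open scoped Kronecker

section Inv
variable {G : Type*} [AddCommGroup G] [Fintype G] [DecidableEq G]

noncomputable def bigU : Submodule ℂ (G → G → ℂ) where
  carrier := {V | ∀ g s, V (g + s) s = V g s}
  zero_mem' := by intro g s; rfl
  add_mem' := by intro V₁ V₂ h₁ h₂ g s; simp [h₁ g s, h₂ g s]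
  smul_mem' := by intro c V h g s; simp [h g s]

noncomputable def bigW : Submodule ℝ (G → G → ℂ) where
  carrier := {V | (∀ g s, V (g + s) s = V g s) ∧ ∀ g s, star (V g s) = V g (-s)}
  zero_mem' := ⟨fun g s => rfl, fun g s => by simp⟩
  add_mem' := by
    rintro V₁ V₂ ⟨h₁, h₁'⟩ ⟨h₂, h₂'⟩
    exact ⟨fun g s => by simp [h₁ g s, h₂ g s],
      fun g s => by simp [← h₁' g s, ← h₂' g s]⟩
  smul_mem' := by
    rintro c V ⟨h, h'⟩
    refine ⟨fun g s => by simp [h g s], fun g s => ?_⟩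
    simp only [Pi.smul_apply]
    rw [Complex.real_smul, Complex.real_smul, star_mul', Complex.star_def,
      Complex.conj_ofReal, ← Complex.star_def, h' g s, mul_comm]

lemma bigU_shift {V : G → G → ℂ} (hV : V ∈ bigU (G := G)) (g s : G) :
    V (g + s) (-s) = V g (-s) := by
  have := hV (g + s) (-s)
  rw [add_neg_cancel_right] at this
  exact this.symm

lemma hPmem : ∀ V ∈ bigU (G := G),
    (fun g s => (V g s + star (V g (-s))) / 2) ∈ bigW (G := G) := by
  intro V hV
  constructor
  · intro g s
    simp only [hV g s, bigU_shift hV g s]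
  · intro g s
    simp only [star_div₀, star_add, star_star, neg_neg]
    rw [add_comm]
    norm_num

lemma hQmem : ∀ V ∈ bigU (G := G),
    (fun g s => (star (V g (-s)) - V g s) * Complex.I / 2) ∈ bigW (G := G) := by
  intro V hV
  constructor
  · intro g s
    simp only [hV g s, bigU_shift hV g s]
  · intro g s
    simp only [star_div₀, star_mul', star_sub, star_star, Complex.star_def,
      Complex.conj_I, Complex.conj_ofNat, Complex.conj_conj, neg_neg]
    ring

lemma finrank_bigW :
    finrank ℝ (bigW (G := G)) = finrank ℂ (bigU (G := G)) := by
  classical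
  have key : finrank ℝ (Submodule.restrictScalars ℝ (bigU (G := G)))
      = finrank ℝ ((bigW (G := G)) × (bigW (G := G))) := by
    refine LinearEquiv.finrank_eq ?_
    refine
      { toFun := fun V =>
          (⟨fun g s => ((V : G → G → ℂ) g s + star ((V : G → G → ℂ) g (-s))) / 2,
             hPmem _ V.2⟩,
           ⟨fun g s => (star ((V : G → G → ℂ) g (-s)) - (V : G → G → ℂ) g s) * Complex.I / 2,
             hQmem _ V.2⟩)
        map_add' := by
          intro V₁ V₂
          refine Prod.ext (Subtype.ext (funext fun g => funext fun s => ?_))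
            (Subtype.ext (funext fun g => funext fun s => ?_)) <;>
          · simp only [Prod.fst_add, Prod.snd_add, Submodule.coe_add, AddMemClass.coe_add,
              Pi.add_apply, star_add]
            ring
        map_smul' := by
          intro c V
          refine Prod.ext (Subtype.ext (funext fun g => funext fun s => ?_))
            (Subtype.ext (funext fun g => funext fun s => ?_)) <;>
          · simp only [Prod.smul_fst, Prod.smul_snd, Submodule.coe_smul, SetLike.val_smul,
              Pi.smul_apply, Complex.real_smul, star_mul', Complex.star_def,
              Complex.conj_ofReal, Complex.conj_conj, Complex.conj_I, RingHom.id_apply]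
            ring
        invFun := fun X =>
          ⟨fun g s => (X.1 : G → G → ℂ) g s + Complex.I * (X.2 : G → G → ℂ) g s, by
            intro g s
            simp only [X.1.2.1 g s, X.2.2.1 g s]⟩
        left_inv := by
          intro V
          refine Subtype.ext (funext fun g => funext fun s => ?_)
          show ((V : G → G → ℂ) g s + star ((V : G → G → ℂ) g (-s))) / 2
              + Complex.I * ((star ((V : G → G → ℂ) g (-s)) - (V : G → G → ℂ) g s)
                * Complex.I / 2) = (V : G → G → ℂ) g s
          linear_combination ((star ((V : G → G → ℂ) g (-s)) - (V : G → G → ℂ) g s) / 2)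
            * Complex.I_sq
        right_inv := by
          intro X
          have h1 : ∀ g s, star ((X.1 : G → G → ℂ) g (-s)) = (X.1 : G → G → ℂ) g s := by
            intro g s
            rw [X.1.2.2 g (-s), neg_neg]
          have h2 : ∀ g s, star ((X.2 : G → G → ℂ) g (-s)) = (X.2 : G → G → ℂ) g s := by
            intro g s
            rw [X.2.2.2 g (-s), neg_neg]
          have hI : star Complex.I = -Complex.I := by
            simp [Complex.star_def]
          refine Prod.ext (Subtype.ext (funext fun g => funext fun s => ?_))
            (Subtype.ext (funext fun g => funext fun s => ?_))
          · show ((((X.1 : G → G → ℂ) g s + Complex.I * (X.2 : G → G → ℂ) g s)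
                + star ((X.1 : G → G → ℂ) g (-s) + Complex.I * (X.2 : G → G → ℂ) g (-s))) / 2)
                = (X.1 : G → G → ℂ) g s
            simp only [star_add, star_mul', hI, h1, h2]
            ring
          · show ((star ((X.1 : G → G → ℂ) g (-s) + Complex.I * (X.2 : G → G → ℂ) g (-s))
                - ((X.1 : G → G → ℂ) g s + Complex.I * (X.2 : G → G → ℂ) g s)) * Complex.I / 2)
                = (X.2 : G → G → ℂ) g s
            simp only [star_add, star_mul', hI, h1, h2]
            linear_combination (-((X.2 : G → G → ℂ) g s)) * Complex.I_sq }
  have t1 : finrank ℝ (Submodule.restrictScalars ℝ (bigU (G := G)))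
      = finrank ℝ (bigU (G := G)) :=
    LinearEquiv.finrank_eq ((Submodule.restrictScalarsEquiv ℝ ℂ _ _).restrictScalars ℝ)
  have t2 : finrank ℝ (bigU (G := G)) = 2 * finrank ℂ (bigU (G := G)) := by
    rw [← Complex.finrank_real_complex, finrank_mul_finrank ℝ ℂ]
  have t3 : finrank ℝ ((bigW (G := G)) × (bigW (G := G)))
      = finrank ℝ (bigW (G := G)) + finrank ℝ (bigW (G := G)) := Module.finrank_prod
  omega



variable {G : Type*} [AddCommGroup G] [Fintype G] [DecidableEq G]

/-- Functions invariant under translation by `s`. -/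
noncomputable def invSub (s : G) : Submodule ℂ (G → ℂ) where
  carrier := {f | ∀ g, f (g + s) = f g}
  zero_mem' := by intro g; rfl
  add_mem' := by intro f₁ f₂ h₁ h₂ g; simp [h₁ g, h₂ g]
  smul_mem' := by intro c f h g; simp [h g]

/-- The subgroup of periods of a function. -/
noncomputable def periodSub (f : G → ℂ) : AddSubgroup G where
  carrier := {t | ∀ g, f (g + t) = f g}
  zero_mem' := by intro g; simp
  add_mem' := by
    intro t u ht hu g
    rw [← add_assoc, hu, ht]
  neg_mem' := by
    intro t ht g
    have := ht (g + -t)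
    rw [neg_add_cancel_right] at this
    exact this.symm

lemma invSub_zsmul {s : G} {f : G → ℂ} (hf : f ∈ invSub s) (z : ℤ) (g : G) :
    f (g + z • s) = f g := by
  have hs : AddSubgroup.zmultiples s ≤ periodSub f := by
    rw [AddSubgroup.zmultiples_le]
    exact hf
  exact hs (AddSubgroup.zsmul_mem (AddSubgroup.zmultiples s) (AddSubgroup.mem_zmultiples s) z) g

lemma finrank_invSub (s : G) :
    finrank ℂ (invSub s) = Fintype.card G / addOrderOf s := by
  classical
  haveI : Fintype (G ⧸ AddSubgroup.zmultiples s) := Fintype.ofFinite _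
  have key : finrank ℂ (invSub s) = finrank ℂ ((G ⧸ AddSubgroup.zmultiples s) → ℂ) := by
    refine LinearEquiv.finrank_eq ?_
    refine
      { toFun := fun f q => Quotient.liftOn' q (f : G → ℂ) ?_
        map_add' := ?_
        map_smul' := ?_
        invFun := fun φ => ⟨fun g => φ (QuotientAddGroup.mk g), ?_⟩
        left_inv := ?_
        right_inv := ?_ }
    · intro a b hab
      rw [QuotientAddGroup.leftRel_apply] at hab
      obtain ⟨z, hz⟩ := hab
      have hz' : z • s = -a + b := hz
      have : b = a + z • s := by rw [hz']; abel
      rw [this, invSub_zsmul f.2]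
    · intro f g
      funext q
      induction q using Quotient.inductionOn' with
      | h a => rfl
    · intro c f
      funext q
      induction q using Quotient.inductionOn' with
      | h a => rfl
    · intro g
      have : (QuotientAddGroup.mk (g + s) : G ⧸ AddSubgroup.zmultiples s)
          = QuotientAddGroup.mk g := by
        rw [QuotientAddGroup.eq]
        exact ⟨-1, by simp⟩
      show φ _ = φ _
      rw [this]
    · intro f; ext g; rfl
    · intro φ; funext q
      induction q using Quotient.inductionOn' with
      | h a => rfl
  rw [key, Module.finrank_fintype_fun_eq_card]
  have h1 : Fintype.card (G ⧸ AddSubgroup.zmultiples s)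
      = (AddSubgroup.zmultiples s).index := by
    rw [AddSubgroup.index, Nat.card_eq_fintype_card]
  have h2 := AddSubgroup.index_mul_card (AddSubgroup.zmultiples s)
  rw [Nat.card_zmultiples, Nat.card_eq_fintype_card] at h2
  rw [h1]
  exact (Nat.div_eq_of_eq_mul_left (addOrderOf_pos s) h2.symm).symm


lemma finrank_bigU :
    finrank ℂ (bigU (G := G)) = ∑ s : G, Fintype.card G / addOrderOf s := by
  classical
  have key : finrank ℂ (bigU (G := G)) = finrank ℂ (∀ s : G, invSub s) := by
    refine LinearEquiv.finrank_eq ?_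
    refine
      { toFun := fun V s => ⟨fun g => (V : G → G → ℂ) g s, fun g => V.2 g s⟩
        map_add' := fun V₁ V₂ => rfl
        map_smul' := fun c V => rfl
        invFun := fun F => ⟨fun g s => (F s : G → ℂ) g, fun g s => (F s).2 g⟩
        left_inv := fun V => rfl
        right_inv := fun F => rfl }
  rw [key, Module.finrank_pi_fintype]
  exact Finset.sum_congr rfl fun s _ => finrank_invSub s

end Inv

section Char
variable {G : Type*} [AddCommGroup G] [Fintype G] [DecidableEq G] {ψ : G → G → ℂ}

/-- The row-wise Fourier transform. -/
noncomputable def rowT (ψ : G → G → ℂ) (A : Matrix G G ℝ) : G → G → ℂ :=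
  fun g s => ∑ k, ψ s k * (A g k : ℂ)

variable (hone : ∀ g : G, ψ g 0 = 1)
variable (hmul : ∀ g h h' : G, ψ g (h + h') = ψ g h * ψ g h')
variable (hsymm : ∀ g h : G, ψ g h = ψ h g)
variable (hstar : ∀ g h : G, star (ψ g h) = ψ g (-h))
variable (hsum : ∀ d : G, d ≠ 0 → ∑ s, ψ s d = 0)

section lemmas1
include hmul hsymm hstar

lemma psi_combo (g h k : G) : ψ g k * star (ψ h k) = ψ (g - h) k := by
  rw [hsymm g k, hsymm h k, hstar, ← hmul, ← sub_eq_add_neg, hsymm]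

lemma rowT_real (A : Matrix G G ℝ) (g s : G) :
    star (rowT ψ A g s) = rowT ψ A g (-s) := by
  rw [rowT, rowT, star_sum]
  refine Finset.sum_congr rfl fun k _ => ?_
  rw [star_mul', Complex.star_def, Complex.conj_ofReal, ← Complex.star_def]
  rw [hsymm s k, hstar, hsymm]

lemma hC (A : Matrix G G ℝ) (i j : G) :
    (∑ k, ψ i k * star (ψ j k) * ((A i k : ℂ) - (A j k : ℂ)))
      = rowT ψ A i (i - j) - rowT ψ A j (i - j) := by
  rw [rowT, rowT, ← Finset.sum_sub_distrib]
  refine Finset.sum_congr rfl fun k _ => ?_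
  rw [psi_combo hmul hsymm hstar]
  ring

lemma mem_defect_iff (A : Matrix G G ℝ) :
    A ∈ defectSubmodule (Matrix.of ψ) ↔ ∀ g s, rowT ψ A (g + s) s = rowT ψ A g s := by
  constructor
  · intro h g s
    have := h (g + s) g
    simp only [Matrix.of_apply] at this
    rw [hC hmul hsymm hstar, add_sub_cancel_left, sub_eq_zero] at this
    exact this
  · intro h i j
    show ∑ k, (Matrix.of ψ) i k * star ((Matrix.of ψ) j k) * ((A i k : ℂ) - (A j k : ℂ)) = 0
    simp only [Matrix.of_apply]
    rw [hC hmul hsymm hstar, sub_eq_zero]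
    have := h j (i - j)
    rwa [add_sub_cancel] at this

end lemmas1

section lemmas2
include hone hmul hsymm hstar hsum

lemma sum_psi (d : G) : ∑ k, ψ d k = if d = 0 then (Fintype.card G : ℂ) else 0 := by
  rcases eq_or_ne d 0 with rfl | hd
  · simp only [if_pos rfl]
    have : ∀ k : G, ψ 0 k = 1 := fun k => by rw [hsymm, hone]
    simp [this]
  · rw [if_neg hd]
    have : ∀ k : G, ψ d k = ψ k d := fun k => hsymm d k
    simp_rw [this]
    exact hsum d hd

lemma psi_orth (s s' : G) :
    ∑ k, ψ s k * star (ψ s' k) = if s = s' then (Fintype.card G : ℂ) else 0 := by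
  have h1 : ∀ k : G, ψ s k * star (ψ s' k) = ψ (s - s') k := fun k =>
    psi_combo hmul hsymm hstar s s' k
  simp_rw [h1]
  rw [sum_psi hone hmul hsymm hstar hsum (s - s')]
  congr 1
  simp [sub_eq_zero]

lemma inversion (A : Matrix G G ℝ) (g k : G) :
    ∑ s, star (ψ s k) * rowT ψ A g s = (Fintype.card G : ℂ) * (A g k : ℂ) := by
  simp_rw [rowT, Finset.mul_sum, ← mul_assoc]
  rw [Finset.sum_comm]
  have : ∀ k' : G, ∑ s, star (ψ s k) * ψ s k' * (A g k' : ℂ)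
      = (if k' = k then (Fintype.card G : ℂ) else 0) * (A g k' : ℂ) := by
    intro k'
    rw [← Finset.sum_mul]
    congr 1
    have h2 : ∀ s : G, star (ψ s k) * ψ s k' = ψ k' s * star (ψ k s) := fun s => by
      rw [hsymm s k, hsymm s k']
      ring
    simp_rw [h2, psi_combo hmul hsymm hstar]
    have h3 : ∀ s : G, ψ (k' - k) s = ψ s (k' - k) := fun s => hsymm _ s
    simp_rw [h3]
    rcases eq_or_ne k' k with rfl | hkk
    · have : ∀ s : G, ψ s (k' - k') = 1 := fun s => by rw [sub_self, hone]
      simp [this, hone]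
    · rw [if_neg hkk]
      exact hsum _ (sub_ne_zero.mpr hkk)
  simp_rw [this, ite_mul, zero_mul]
  rw [Finset.sum_ite_eq' Finset.univ k]
  simp

theorem defect_char :
    defect (Matrix.of ψ) = ∑ s : G, Fintype.card G / addOrderOf s := by
  classical
  have hn : (Fintype.card G : ℂ) ≠ 0 := Nat.cast_ne_zero.mpr Fintype.card_ne_zero
  have hTadd : ∀ A B : Matrix G G ℝ, rowT ψ (A + B) = rowT ψ A + rowT ψ B := by
    intro A B; funext g s
    simp only [rowT, Matrix.add_apply, Pi.add_apply]
    rw [← Finset.sum_add_distrib]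
    refine Finset.sum_congr rfl fun k _ => ?_
    push_cast; ring
  have hTsmul : ∀ (c : ℝ) (A : Matrix G G ℝ), rowT ψ (c • A) = c • rowT ψ A := by
    intro c A; funext g s
    simp only [rowT, Matrix.smul_apply, Pi.smul_apply, smul_eq_mul, Complex.real_smul]
    rw [Finset.mul_sum]
    refine Finset.sum_congr rfl fun k _ => ?_
    push_cast; ring
  set Φ : ↥(defectSubmodule (Matrix.of ψ)) →ₗ[ℝ] ↥(bigW (G := G)) :=
    { toFun := fun A => ⟨rowT ψ (A : Matrix G G ℝ),
        (mem_defect_iff hmul hsymm hstar _).1 A.2,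
        rowT_real hmul hsymm hstar _⟩
      map_add' := by
        intro A B
        exact Subtype.ext (by simp [hTadd])
      map_smul' := by
        intro c A
        exact Subtype.ext (by simp [hTsmul]) } with hΦ
  have hinj : Function.Injective Φ := by
    rw [injective_iff_map_eq_zero]
    intro A hA
    have h0 : rowT ψ (A : Matrix G G ℝ) = 0 := congrArg Subtype.val hA
    refine Subtype.ext (Matrix.ext fun g k => ?_)
    have hi := inversion hone hmul hsymm hstar hsum (A : Matrix G G ℝ) g k
    rw [h0] at hi
    simp only [Pi.zero_apply, mul_zero, Finset.sum_const_zero] at hi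
    have h5 : ((A : Matrix G G ℝ) g k : ℂ) = 0 :=
      (mul_eq_zero.mp hi.symm).resolve_left hn
    simp only [ZeroMemClass.coe_zero, Matrix.zero_apply]
    exact_mod_cast h5
  have hsurj : Function.Surjective Φ := by
    rintro ⟨V, hV1, hV2⟩
    set B : G → G → ℂ :=
      fun g k => (Fintype.card G : ℂ)⁻¹ * ∑ s, star (ψ s k) * V g s with hB
    have hBreal : ∀ g k, star (B g k) = B g k := by
      intro g k
      have hswap : ∀ s : G, ψ s k * star (V g s) = star (ψ (-s) k) * V g (-s) := by
        intro s
        rw [hV2 g s]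
        congr 1
        rw [hsymm (-s) k, hstar k (-s), neg_neg, hsymm]
      calc star (B g k) = (Fintype.card G : ℂ)⁻¹ * ∑ s, ψ s k * star (V g s) := by
            rw [hB]
            simp only [star_mul', star_inv₀, star_natCast, star_sum, star_star]
        _ = (Fintype.card G : ℂ)⁻¹ * ∑ s, star (ψ s k) * V g s := by
            congr 1
            simp_rw [hswap]
            exact Fintype.sum_equiv (Equiv.neg G) _ _ (fun x => rfl)
        _ = B g k := rfl
    set A : Matrix G G ℝ := Matrix.of (fun g k => (B g k).re) with hA
    have hAB : ∀ g k, ((A g k : ℝ) : ℂ) = B g k := by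
      intro g k
      have := hBreal g k
      rw [Complex.star_def, Complex.conj_eq_iff_re] at this
      exact this
    have hTA : rowT ψ A = V := by
      funext g s
      rw [rowT]
      simp_rw [hAB, hB]
      have step : ∀ k, ψ s k * ((Fintype.card G : ℂ)⁻¹ * ∑ s', star (ψ s' k) * V g s')
          = (Fintype.card G : ℂ)⁻¹ * ∑ s', ψ s k * star (ψ s' k) * V g s' := by
        intro k
        simp only [Finset.mul_sum]
        exact Finset.sum_congr rfl fun s' _ => by ring
      simp_rw [step]
      rw [← Finset.mul_sum, Finset.sum_comm]
      have inner : ∀ s' : G, ∑ k, ψ s k * star (ψ s' k) * V g s'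
          = (if s = s' then (Fintype.card G : ℂ) else 0) * V g s' := by
        intro s'
        rw [← Finset.sum_mul, psi_orth hone hmul hsymm hstar hsum]
      simp_rw [inner, ite_mul, zero_mul]
      rw [Finset.sum_ite_eq Finset.univ s]
      simp [inv_mul_cancel_left₀ hn]
    refine ⟨⟨A, (mem_defect_iff hmul hsymm hstar A).2 ?_⟩, Subtype.ext ?_⟩
    · intro g' s'
      rw [hTA]
      exact hV1 g' s'
    · exact hTA
  have heq := LinearEquiv.finrank_eq (LinearEquiv.ofBijective Φ ⟨hinj, hsurj⟩)
  unfold defect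
  rw [heq, finrank_bigW, finrank_bigU]

end lemmas2
end Char

section Reindex

lemma mem_defect_submatrix {I J : Type*} [Fintype I] [Fintype J] (e : I ≃ J)
    (H : Matrix J J ℂ) (A : Matrix J J ℝ) (hA : A ∈ defectSubmodule H) :
    A.submatrix e e ∈ defectSubmodule (H.submatrix e e) := by
  intro i j
  refine Eq.trans ?_ (hA (e i) (e j))
  exact Fintype.sum_equiv e _ _ (fun k => by simp [Matrix.submatrix_apply])

theorem defect_submatrix {I J : Type*} [Fintype I] [Fintype J] (e : I ≃ J)
    (H : Matrix J J ℂ) : defect (H.submatrix e e) = defect H := by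
  unfold defect
  refine LinearEquiv.finrank_eq ?_
  have hkeyH : (H.submatrix ⇑e ⇑e).submatrix ⇑e.symm ⇑e.symm = H := by
    ext i j; simp
  refine
    { toFun := fun A => ⟨(A : Matrix I I ℝ).submatrix ⇑e.symm ⇑e.symm, by
        have := mem_defect_submatrix e.symm (H.submatrix ⇑e ⇑e) _ A.2
        rwa [hkeyH] at this⟩
      map_add' := by intro A B; exact Subtype.ext rfl
      map_smul' := by intro c A; exact Subtype.ext rfl
      invFun := fun A => ⟨(A : Matrix J J ℝ).submatrix ⇑e ⇑e,
        mem_defect_submatrix e H _ A.2⟩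
      left_inv := by
        intro A
        refine Subtype.ext (Matrix.ext fun i j => ?_)
        simp
      right_inv := by
        intro A
        refine Subtype.ext (Matrix.ext fun i j => ?_)
        simp }

end Reindex

section ZModStuff

/-- Primitive `M`-th root of unity. -/
noncomputable def zeta (M : ℕ) : ℂ := Complex.exp (2 * Real.pi * Complex.I / M)

variable (M : ℕ) [NeZero M]

lemma zeta_prim : IsPrimitiveRoot (zeta M) M := Complex.isPrimitiveRoot_exp M (NeZero.ne M)

lemma zeta_pow_card : zeta M ^ M = 1 := (zeta_prim M).pow_eq_one

lemma zeta_pow_mod (a : ℕ) : zeta M ^ a = zeta M ^ (a % M) := by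
  conv_lhs => rw [← Nat.div_add_mod a M]
  rw [pow_add, pow_mul, zeta_pow_card, one_pow, one_mul]

lemma zeta_pow_congr {a b : ℕ} (h : a ≡ b [MOD M]) : zeta M ^ a = zeta M ^ b := by
  rw [zeta_pow_mod, h, ← zeta_pow_mod]

/-- The standard pairing on `ZMod M`. -/
noncomputable def psiZ (M : ℕ) : ZMod M → ZMod M → ℂ :=
  fun a b => zeta M ^ (a.val * b.val)

lemma psiZ_one : ∀ g : ZMod M, psiZ M g 0 = 1 := by
  intro g; simp [psiZ]

lemma psiZ_mul : ∀ g h h' : ZMod M, psiZ M g (h + h') = psiZ M g h * psiZ M g h' := by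
  intro g h h'
  rw [psiZ, psiZ, psiZ, ← pow_add]
  refine zeta_pow_congr M ?_
  have h1 : (h + h').val ≡ h.val + h'.val [MOD M] := by
    rw [ZMod.val_add]; exact Nat.mod_modEq _ M
  calc g.val * (h + h').val ≡ g.val * (h.val + h'.val) [MOD M] := h1.mul_left g.val
    _ = g.val * h.val + g.val * h'.val := by ring

lemma psiZ_symm : ∀ g h : ZMod M, psiZ M g h = psiZ M h g := by
  intro g h; rw [psiZ, psiZ, mul_comm]

lemma psiZ_norm (g h : ZMod M) : ‖psiZ M g h‖ = 1 := by
  refine Complex.norm_eq_one_of_pow_eq_one (n := M) ?_ (NeZero.ne M)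
  rw [psiZ, ← pow_mul, mul_comm (g.val * h.val), pow_mul, zeta_pow_card, one_pow]

lemma psiZ_star : ∀ g h : ZMod M, star (psiZ M g h) = psiZ M g (-h) := by
  intro g h
  have hunit : psiZ M g h * psiZ M g (-h) = 1 := by
    rw [← psiZ_mul, add_neg_cancel, psiZ_one]
  have hinv : (psiZ M g h)⁻¹ = star (psiZ M g h) := Complex.inv_eq_conj (psiZ_norm M g h)
  rw [← hinv]
  exact inv_eq_of_mul_eq_one_right hunit

/-- `Fin M ≃ ZMod M`. -/
def finZMod : Fin M ≃ ZMod M where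
  toFun i := ((i : ℕ) : ZMod M)
  invFun x := ⟨x.val, ZMod.val_lt x⟩
  left_inv i := by
    ext
    exact ZMod.val_cast_of_lt i.isLt
  right_inv x := ZMod.natCast_rightInverse x

lemma finZMod_val (i : Fin M) : (finZMod M i).val = (i : ℕ) :=
  ZMod.val_cast_of_lt i.isLt

lemma psiZ_sum : ∀ d : ZMod M, d ≠ 0 → ∑ s, psiZ M s d = 0 := by
  intro d hd
  have hx1 : zeta M ^ d.val ≠ 1 := by
    intro hcon
    rw [(zeta_prim M).pow_eq_one_iff_dvd] at hcon
    revert hcon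
    intro hdvd
    have h1 : d.val ≠ 0 := fun h => hd (by
      have := ZMod.natCast_rightInverse (n := M) d
      rw [← this, h, Nat.cast_zero])
    exact absurd (Nat.le_of_dvd (Nat.pos_of_ne_zero h1) hdvd) (not_le.mpr (ZMod.val_lt d))
  have hxM : (zeta M ^ d.val) ^ M = 1 := by
    rw [← pow_mul, mul_comm, pow_mul, zeta_pow_card, one_pow]
  have key : ∑ s : ZMod M, psiZ M s d = ∑ i ∈ Finset.range M, (zeta M ^ d.val) ^ i := by
    rw [← Fin.sum_univ_eq_sum_range]
    refine (Fintype.sum_equiv (finZMod M) _ _ fun i => ?_).symm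
    rw [psiZ, finZMod_val, mul_comm, pow_mul]
  rw [key, geom_sum_eq hx1, hxM, sub_self, zero_div]

lemma fourier_defect_aux :
    defect (FourierMatrix M) = ∑ s : ZMod M, M / addOrderOf s := by
  have heq : FourierMatrix M = (Matrix.of (psiZ M)).submatrix (finZMod M) (finZMod M) := by
    ext i j
    simp only [FourierMatrix, Matrix.of_apply, Matrix.submatrix_apply, psiZ, finZMod_val]
    rfl
  rw [heq, defect_submatrix, defect_char (psiZ_one M) (psiZ_mul M) (psiZ_symm M)
    (psiZ_star M) (psiZ_sum M), ZMod.card]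

end ZModStuff

section Kron
open scoped Kronecker

variable (M N : ℕ) [NeZero M] [NeZero N]

/-- Pairing on the product group. -/
noncomputable def psiP : (ZMod M × ZMod N) → (ZMod M × ZMod N) → ℂ :=
  fun p q => psiZ M p.1 q.1 * psiZ N p.2 q.2

lemma psiP_one : ∀ g, psiP M N g 0 = 1 := by
  intro g
  show psiZ M g.1 0 * psiZ N g.2 0 = 1
  rw [psiZ_one, psiZ_one, one_mul]

lemma psiP_mul : ∀ g h h', psiP M N g (h + h') = psiP M N g h * psiP M N g h' := by
  intro g h h'
  show psiZ M g.1 (h.1 + h'.1) * psiZ N g.2 (h.2 + h'.2) = _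
  rw [psiZ_mul, psiZ_mul]
  show _ = psiZ M g.1 h.1 * psiZ N g.2 h.2 * (psiZ M g.1 h'.1 * psiZ N g.2 h'.2)
  ring

lemma psiP_symm : ∀ g h, psiP M N g h = psiP M N h g := by
  intro g h
  show psiZ M g.1 h.1 * psiZ N g.2 h.2 = psiZ M h.1 g.1 * psiZ N h.2 g.2
  rw [psiZ_symm, psiZ_symm N]

lemma psiP_star : ∀ g h, star (psiP M N g h) = psiP M N g (-h) := by
  intro g h
  show star (psiZ M g.1 h.1 * psiZ N g.2 h.2) = psiZ M g.1 (-h.1) * psiZ N g.2 (-h.2)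
  rw [star_mul', psiZ_star, psiZ_star, mul_comm]

lemma psiP_sum : ∀ d, d ≠ 0 → ∑ s, psiP M N s d = 0 := by
  intro d hd
  have : ∑ s : ZMod M × ZMod N, psiP M N s d
      = (∑ s1 : ZMod M, psiZ M s1 d.1) * (∑ s2 : ZMod N, psiZ N s2 d.2) := by
    rw [Finset.sum_mul_sum]
    rw [Fintype.sum_prod_type]
    rfl
  rw [this]
  rcases Decidable.eq_or_ne d.1 0 with h1 | h1
  · have h2 : d.2 ≠ 0 := by
      intro h2
      exact hd (Prod.ext h1 h2)
    rw [psiZ_sum N d.2 h2, mul_zero]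
  · rw [psiZ_sum M d.1 h1, zero_mul]

lemma kron_defect_aux :
    defect (FourierMatrix M ⊗ₖ FourierMatrix N)
      = ∑ p : ZMod M × ZMod N, M * N / addOrderOf p := by
  have heq : FourierMatrix M ⊗ₖ FourierMatrix N
      = (Matrix.of (psiP M N)).submatrix
          ((finZMod M).prodCongr (finZMod N)) ((finZMod M).prodCongr (finZMod N)) := by
    ext ⟨i, a⟩ ⟨j, b⟩
    simp only [Matrix.kroneckerMap_apply, Matrix.submatrix_apply, Equiv.prodCongr_apply,
      Matrix.of_apply, Prod.map_fst, Prod.map_snd]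
    show FourierMatrix M i j * FourierMatrix N a b
        = psiZ M (finZMod M i) (finZMod M j) * psiZ N (finZMod N a) (finZMod N b)
    simp only [FourierMatrix, Matrix.of_apply, psiZ, finZMod_val]
    rfl
  rw [heq, defect_submatrix, defect_char (psiP_one M N) (psiP_mul M N) (psiP_symm M N)
    (psiP_star M N) (psiP_sum M N)]
  refine Finset.sum_congr rfl fun p _ => ?_
  congr 1
  rw [Fintype.card_prod, ZMod.card, ZMod.card]

end Kron

/-- `d(F_M ⊗ F_N) = d(F_M)·d(F_N)` if and only if `gcd(M,N) = 1`. -/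
theorem stmt_9 (M N : ℕ) (hM : 1 ≤ M) (hN : 1 ≤ N) :
    defect (FourierMatrix M ⊗ₖ FourierMatrix N) =
      defect (FourierMatrix M) * defect (FourierMatrix N) ↔ Nat.gcd M N = 1 := by
  haveI : NeZero M := ⟨by omega⟩
  haveI : NeZero N := ⟨by omega⟩
  rw [kron_defect_aux, fourier_defect_aux, fourier_defect_aux]
  -- abbreviations
  have haM : ∀ s : ZMod M, addOrderOf s ∣ M := fun s => by
    have := addOrderOf_dvd_card (x := s)
    rwa [ZMod.card] at this
  have haN : ∀ t : ZMod N, addOrderOf t ∣ N := fun t => by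
    have := addOrderOf_dvd_card (x := t)
    rwa [ZMod.card] at this
  have hterm : ∀ p : ZMod M × ZMod N, M * N / addOrderOf p
      = M / addOrderOf p.1 * (N / addOrderOf p.2)
        * Nat.gcd (addOrderOf p.1) (addOrderOf p.2) := by
    intro p
    set a := addOrderOf p.1 with ha
    set b := addOrderOf p.2 with hb
    have hap : 0 < a := addOrderOf_pos p.1
    have hbp : 0 < b := addOrderOf_pos p.2
    rw [Prod.addOrderOf, ← ha, ← hb]
    refine Nat.div_eq_of_eq_mul_left (Nat.lcm_pos hap hbp) ?_
    calc M * N = (M / a * a) * (N / b * b) := by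
          rw [Nat.div_mul_cancel (haM p.1), Nat.div_mul_cancel (haN p.2)]
      _ = M / a * (N / b) * (a * b) := by ring
      _ = M / a * (N / b) * (Nat.gcd a b * Nat.lcm a b) := by rw [Nat.gcd_mul_lcm]
      _ = M / a * (N / b) * Nat.gcd a b * Nat.lcm a b := by ring
  have hR : (∑ s : ZMod M, M / addOrderOf s) * (∑ t : ZMod N, N / addOrderOf t)
      = ∑ p : ZMod M × ZMod N, M / addOrderOf p.1 * (N / addOrderOf p.2) := by
    rw [Finset.sum_mul_sum, Fintype.sum_prod_type]
  rw [hR]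
  simp_rw [hterm]
  have hcpos : ∀ p : ZMod M × ZMod N, 0 < M / addOrderOf p.1 * (N / addOrderOf p.2) := by
    intro p
    have h1 : 0 < M / addOrderOf p.1 :=
      Nat.div_pos (Nat.le_of_dvd (by omega) (haM p.1)) (addOrderOf_pos p.1)
    have h2 : 0 < N / addOrderOf p.2 :=
      Nat.div_pos (Nat.le_of_dvd (by omega) (haN p.2)) (addOrderOf_pos p.2)
    positivity
  have hgpos : ∀ p : ZMod M × ZMod N, 0 < Nat.gcd (addOrderOf p.1) (addOrderOf p.2) :=
    fun p => Nat.gcd_pos_of_pos_left _ (addOrderOf_pos p.1)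
  have hle : ∀ p ∈ Finset.univ (α := ZMod M × ZMod N),
      M / addOrderOf p.1 * (N / addOrderOf p.2)
        ≤ M / addOrderOf p.1 * (N / addOrderOf p.2)
          * Nat.gcd (addOrderOf p.1) (addOrderOf p.2) :=
    fun p _ => Nat.le_mul_of_pos_right _ (hgpos p)
  rw [eq_comm, Finset.sum_eq_sum_iff_of_le hle]
  constructor
  · intro h
    have h1 := h (1, 1) (Finset.mem_univ _)
    have h2 : Nat.gcd (addOrderOf ((1 : ZMod M), (1 : ZMod N)).1)
        (addOrderOf ((1 : ZMod M), (1 : ZMod N)).2) = 1 := by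
      have hc := hcpos (1, 1)
      nlinarith [h1, hc]
    rwa [ZMod.addOrderOf_one, ZMod.addOrderOf_one] at h2
  · intro h p _
    have hco : Nat.Coprime (addOrderOf p.1) (addOrderOf p.2) :=
      Nat.Coprime.coprime_dvd_left (haM p.1) (Nat.Coprime.coprime_dvd_right (haN p.2) h)
    rw [hco, mul_one]
end

section
/- Let N, M, k ≥ 1 be integers, let q = e^{2πi/(MNk)}, let ν = e^{2πi/N}, w = e^{2πi/M}, and let p_0,…,p_{M−1} ∈ ℤ. Define H ∈ M_{MN}(ℂ), with rows and columns indexed by pairs (i,a) with 0 ≤ i ≤ N−1 and 0 ≤ a ≤ M−1, by H_{(i,a),(j,b)} = ν^{ij}·w^{ab}·q^{i(M·p_b + b)}. Then H is a complex Hadamard matrix (it is the Diţă deformation F_N ⊗_Q F_M with parameter matrix Q_{ib} = q^{i(M·p_b+b)}), and H is a master Hadamard matrix: there exist real numbers t_{(i,a)} and n_{(j,b)} such that H_{(i,a),(j,b)} = e^{i·t_{(i,a)}·n_{(j,b)}} for all indices. -/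
lemma root_sum (N : ℕ) (hN : 0 < N) (d : ℤ) :
    ∑ j : Fin N, Complex.exp (2 * Real.pi * Complex.I / N) ^ (d * ((j : ℕ) : ℤ)) =
      if (N : ℤ) ∣ d then (N : ℂ) else 0 := by
  have h0 : Complex.exp (2 * Real.pi * Complex.I / N) ≠ 0 := Complex.exp_ne_zero _
  set ζ : ℂ := Complex.exp (2 * Real.pi * Complex.I / N) ^ d with hζ
  have hprim : IsPrimitiveRoot (Complex.exp (2 * Real.pi * Complex.I / N)) N :=
    Complex.isPrimitiveRoot_exp N hN.ne'
  have hζ1 : ζ = 1 ↔ (N : ℤ) ∣ d := hprim.zpow_eq_one_iff_dvd d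
  have hrw : ∀ j : Fin N, Complex.exp (2 * Real.pi * Complex.I / N) ^ (d * ((j : ℕ) : ℤ))
      = ζ ^ (j : ℕ) := by
    intro j
    rw [hζ, ← zpow_natCast (ζ) (j : ℕ), hζ, ← zpow_mul]
  simp_rw [hrw]
  rw [Fin.sum_univ_eq_sum_range (fun j => ζ ^ j) N]
  by_cases h1 : ζ = 1
  · rw [if_pos (hζ1.mp h1)]
    simp [h1]
  · rw [if_neg (fun hd => h1 (hζ1.mpr hd))]
    have hζN : ζ ^ N = 1 := by
      rw [hζ, ← zpow_natCast, ← zpow_mul, mul_comm d ((N:ℕ):ℤ), zpow_mul, zpow_natCast,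
        ← Complex.exp_nat_mul]
      have : (N : ℂ) * (2 * Real.pi * Complex.I / N) = 2 * Real.pi * Complex.I := by
        have hNc : (N : ℂ) ≠ 0 := Nat.cast_ne_zero.mpr hN.ne'
        field_simp
      rw [this, Complex.exp_two_pi_mul_I, one_zpow]
    rw [geom_sum_eq h1, hζN, sub_self, zero_div]

/-- the Diţă deformation `H_{(i,a),(j,b)} = ν^{ij} w^{ab} q^{i(Mp_b+b)}`
(with `q = e^{2πi/(MNk)}`, `ν = e^{2πi/N}`, `w = e^{2πi/M}`, `p_b ∈ ℤ`) is a complex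
Hadamard matrix, and it is a master Hadamard matrix:
`H_{(i,a),(j,b)} = e^{i t_{(i,a)} n_{(j,b)}}` for some reals `t, n`. -/
theorem stmt_12 (N M k : ℕ) (hN : 1 ≤ N) (hM : 1 ≤ M) (hk : 1 ≤ k)
    (p : Fin M → ℤ)
    (q ν w : ℂ)
    (hq : q = Complex.exp (2 * Real.pi * Complex.I / (M * N * k)))
    (hν : ν = Complex.exp (2 * Real.pi * Complex.I / N))
    (hw : w = Complex.exp (2 * Real.pi * Complex.I / M))
    (H : Matrix (Fin N × Fin M) (Fin N × Fin M) ℂ)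
    (hH : ∀ (i j : Fin N) (a b : Fin M),
      H (i, a) (j, b) =
        ν ^ ((i : ℕ) * (j : ℕ)) * w ^ ((a : ℕ) * (b : ℕ)) *
          q ^ (((i : ℕ) : ℤ) * ((M : ℤ) * p b + (b : ℕ)))) :
    (∀ x y : Fin N × Fin M, ‖H x y‖ = 1) ∧
    (∀ x y : Fin N × Fin M,
      ∑ z : Fin N × Fin M, H x z * star (H y z) =
        if x = y then ((M * N : ℕ) : ℂ) else 0) ∧
    (∃ t n : Fin N × Fin M → ℝ, ∀ x y : Fin N × Fin M,
      H x y = Complex.exp (Complex.I * (t x) * (n y))) := by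
  have hNc : (N : ℂ) ≠ 0 := Nat.cast_ne_zero.mpr (by omega)
  have hMc : (M : ℂ) ≠ 0 := Nat.cast_ne_zero.mpr (by omega)
  have hkc : (k : ℂ) ≠ 0 := Nat.cast_ne_zero.mpr (by omega)
  have hν0 : ν ≠ 0 := by rw [hν]; exact Complex.exp_ne_zero _
  have hw0 : w ≠ 0 := by rw [hw]; exact Complex.exp_ne_zero _
  have hq0 : q ≠ 0 := by rw [hq]; exact Complex.exp_ne_zero _
  -- master form
  set t : Fin N × Fin M → ℝ := fun x => (x.1 : ℝ) + N * k * (x.2 : ℝ) with ht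
  set n : Fin N × Fin M → ℝ :=
    fun y => 2 * Real.pi * (M * k * (y.1 : ℝ) + M * (p y.2 : ℝ) + (y.2 : ℝ)) / (M * N * k)
    with hn
  have key : ∀ x y : Fin N × Fin M, H x y = Complex.exp (Complex.I * (t x) * (n y)) := by
    rintro ⟨i, a⟩ ⟨j, b⟩
    rw [hH, hν, hw, hq]
    rw [← Complex.exp_nat_mul, ← Complex.exp_nat_mul, ← Complex.exp_int_mul,
      ← Complex.exp_add, ← Complex.exp_add]
    have hexp : (Complex.I * ((t (i, a) : ℝ) : ℂ) * ((n (j, b) : ℝ) : ℂ)) =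
        (((i : ℕ) * (j : ℕ) : ℕ) : ℂ) * (2 * Real.pi * Complex.I / N) +
        (((a : ℕ) * (b : ℕ) : ℕ) : ℂ) * (2 * Real.pi * Complex.I / M) +
        (((i : ℕ) : ℤ) * ((M : ℤ) * p b + (b : ℕ)) : ℤ) * (2 * Real.pi * Complex.I / (M * N * k)) +
        ((((a : ℕ) : ℤ) * (k : ℤ) * ((j : ℕ) : ℤ) + ((a : ℕ) : ℤ) * p b : ℤ) : ℂ) *
          (2 * Real.pi * Complex.I) := by
      rw [ht, hn]
      push_cast
      field_simp
      ring
    rw [hexp]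
    conv_rhs => rw [Complex.exp_add, Complex.exp_int_mul_two_pi_mul_I, mul_one]
  refine ⟨?_, ?_, ⟨t, n, key⟩⟩
  · intro x y
    rw [key]
    rw [Complex.norm_exp]
    have : (Complex.I * ((t x : ℝ) : ℂ) * ((n y : ℝ) : ℂ)).re = 0 := by
      simp [Complex.mul_re, Complex.mul_im]
    rw [this, Real.exp_zero]
  · rintro ⟨i, a⟩ ⟨i', a'⟩
    rw [Fintype.sum_prod_type]
    have hsν : star ν = ν⁻¹ := by
      rw [Complex.star_def, hν, ← Complex.exp_conj, ← Complex.exp_neg]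
      congr 1
      simp [map_div₀, Complex.conj_I, map_ofNat]
      ring
    have hsw : star w = w⁻¹ := by
      rw [Complex.star_def, hw, ← Complex.exp_conj, ← Complex.exp_neg]
      congr 1
      simp [map_div₀, Complex.conj_I, map_ofNat]
      ring
    have hsq : star q = q⁻¹ := by
      rw [Complex.star_def, hq, ← Complex.exp_conj, ← Complex.exp_neg]
      congr 1
      simp [map_div₀, Complex.conj_I, map_ofNat]
      ring
    have hterm : ∀ (j : Fin N) (b : Fin M),
        H (i, a) (j, b) * star (H (i', a') (j, b)) =
          ν ^ ((((i : ℕ) : ℤ) - ((i' : ℕ) : ℤ)) * ((j : ℕ) : ℤ)) *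
            (w ^ ((((a : ℕ) : ℤ) - ((a' : ℕ) : ℤ)) * ((b : ℕ) : ℤ)) *
              q ^ ((((i : ℕ) : ℤ) - ((i' : ℕ) : ℤ)) * ((M : ℤ) * p b + (b : ℕ)))) := by
      intro j b
      rw [hH, hH, star_mul', star_mul', star_pow, star_pow, star_zpow₀, hsν, hsw, hsq]
      simp only [inv_pow, inv_zpow']
      have eD : (((i : ℕ) : ℤ) - ((i' : ℕ) : ℤ)) * ((j : ℕ) : ℤ)
          = (((i : ℕ) * (j : ℕ) : ℕ) : ℤ) + -(((i' : ℕ) * (j : ℕ) : ℕ) : ℤ) := by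
        push_cast; ring
      have eE : (((a : ℕ) : ℤ) - ((a' : ℕ) : ℤ)) * ((b : ℕ) : ℤ)
          = (((a : ℕ) * (b : ℕ) : ℕ) : ℤ) + -(((a' : ℕ) * (b : ℕ) : ℕ) : ℤ) := by
        push_cast; ring
      have eF : (((i : ℕ) : ℤ) - ((i' : ℕ) : ℤ)) * ((M : ℤ) * p b + (b : ℕ))
          = ((i : ℕ) : ℤ) * ((M : ℤ) * p b + (b : ℕ))
            + -(((i' : ℕ) : ℤ) * ((M : ℤ) * p b + (b : ℕ))) := by
        ring
      rw [eD, eE, eF, zpow_add₀ hν0, zpow_add₀ hw0, zpow_add₀ hq0]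
      simp only [zpow_neg, zpow_natCast]
      ring
    simp_rw [hterm]
    rw [← Finset.sum_mul_sum]
    by_cases hii : i = i'
    · subst hii
      simp only [sub_self, zero_mul, zpow_zero, mul_one, one_mul]
      rw [Finset.sum_const, Finset.card_univ, Fintype.card_fin]
      by_cases haa : a = a'
      · subst haa
        simp only [sub_self, zero_mul, zpow_zero]
        rw [Finset.sum_const, Finset.card_univ, Fintype.card_fin]
        simp only [smul_eq_mul, mul_one, if_pos]
        push_cast
        ring
      · rw [hw, root_sum M (by omega) _]
        rw [if_neg, if_neg]
        · simp
        · exact fun h => haa (Prod.ext_iff.mp h).2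
        · intro hdvd
          have h1 : (a : ℕ) < M := a.isLt
          have h2 : (a' : ℕ) < M := a'.isLt
          have h3 : (a : ℕ) ≠ (a' : ℕ) := fun h => haa (Fin.ext h)
          have h0 := Int.eq_zero_of_abs_lt_dvd hdvd (by rw [abs_lt]; constructor <;> omega)
          omega
    · rw [hν, root_sum N (by omega) _]
      rw [if_neg, if_neg]
      · simp
      · exact fun h => hii (Prod.ext_iff.mp h).1
      · intro hdvd
        have h1 : (i : ℕ) < N := i.isLt
        have h2 : (i' : ℕ) < N := i'.isLt
        have h3 : (i : ℕ) ≠ (i' : ℕ) := fun h => hii (Fin.ext h)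
        have h0 := Int.eq_zero_of_abs_lt_dvd hdvd (by rw [abs_lt]; constructor <;> omega)
        omega
end

section
/- Let H ∈ M_N(ℂ) be a master Hadamard matrix, given by H_{jk} = e^{i·m_j·n_k} with m, n ∈ ℝ^N. Define L ∈ M_N(ℂ) by L_{ij} = ∑_{k=1}^N e^{−i(m_i + m_j)·n_k} and define R, with rows indexed by 1 ≤ s ≤ N and columns by pairs (i,j), by R_{s,(i,j)} = ∑_{l=1}^N e^{i(m_i − m_s − m_j)·n_l}. Then the defect of H equals the real dimension of the space {B ∈ M_N(ℂ) : conj(B) = (1/N)·B·L, and ∑_{s=1}^N B_{is}·R_{s,(i,j)} = ∑_{s=1}^N B_{js}·R_{s,(i,j)} for all 1 ≤ i,j ≤ N}. -/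
/-- The real vector space `{B ∈ M_N(ℂ) : conj(B) = (1/N)·B·L, (BR)_{i,ij} = (BR)_{j,ij}}`
appearing in the defect formula for master Hadamard matrices. -/
noncomputable def masterSpace (N : ℕ) (L : Matrix (Fin N) (Fin N) ℂ)
    (R : Fin N → Fin N → Fin N → ℂ) : Submodule ℝ (Matrix (Fin N) (Fin N) ℂ) where
  carrier := {B | (∀ i j, star (B i j) = (1 / (N : ℂ)) * (B * L) i j) ∧
    (∀ i j, ∑ s, B i s * R s i j = ∑ s, B j s * R s i j)}
  zero_mem' := by
    refine ⟨fun i j => ?_, fun i j => ?_⟩ <;> simp [Matrix.zero_mul]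
  add_mem' := by
    rintro B C ⟨hB1, hB2⟩ ⟨hC1, hC2⟩
    refine ⟨fun i j => ?_, fun i j => ?_⟩
    · rw [Matrix.add_mul, Matrix.add_apply, Matrix.add_apply, star_add,
        hB1 i j, hC1 i j, mul_add]
    · simp only [Matrix.add_apply, add_mul, Finset.sum_add_distrib, hB2 i j, hC2 i j]
  smul_mem' := by
    rintro c B ⟨hB1, hB2⟩
    refine ⟨fun i j => ?_, fun i j => ?_⟩
    · rw [Matrix.smul_mul, Matrix.smul_apply, Matrix.smul_apply, star_smul,
        star_trivial, hB1 i j, mul_smul_comm]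
    · simp only [Matrix.smul_apply, smul_mul_assoc, ← Finset.smul_sum, hB2 i j]

open Complex Finset

private lemma star_exp_aux (a b : ℝ) :
    star (Complex.exp (Complex.I * a * b)) = Complex.exp (-(Complex.I * a * b)) := by
  rw [Complex.star_def, ← Complex.exp_conj]
  congr 1
  simp [Complex.conj_ofReal]

private lemma colOrth {N : ℕ} (hN : 1 ≤ N) (m n : Fin N → ℝ)
    (H : Matrix (Fin N) (Fin N) ℂ)
    (hH : ∀ j k, H j k = Complex.exp (Complex.I * (m j) * (n k)))
    (horth : ∀ i j : Fin N, ∑ k, H i k * star (H j k) = if i = j then (N : ℂ) else 0)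
    (k l : Fin N) :
    ∑ s, Complex.exp (Complex.I * (m s) * ((n k : ℂ) - (n l))) = if k = l then (N:ℂ) else 0 := by
  have hNne : (N:ℂ) ≠ 0 := Nat.cast_ne_zero.mpr (by omega)
  have h1 : H * H.conjTranspose = (N:ℂ) • 1 := by
    ext i j
    rw [Matrix.mul_apply]
    simp only [Matrix.conjTranspose_apply, Matrix.smul_apply, Matrix.one_apply, smul_eq_mul]
    rw [horth i j]
    split_ifs <;> simp
  have h3 : H * ((N:ℂ)⁻¹ • H.conjTranspose) = 1 := by
    rw [Matrix.mul_smul, h1, smul_smul, inv_mul_cancel₀ hNne, one_smul]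
  have h4 : ((N:ℂ)⁻¹ • H.conjTranspose) * H = 1 := mul_eq_one_comm.mp h3
  have h2 : H.conjTranspose * H = (N:ℂ) • 1 := by
    calc H.conjTranspose * H = (N:ℂ) • (((N:ℂ)⁻¹ • H.conjTranspose) * H) := by
          rw [Matrix.smul_mul, smul_smul, mul_inv_cancel₀ hNne, one_smul]
    _ = (N:ℂ) • 1 := by rw [h4]
  have h5 : (H.conjTranspose * H) l k = ((N:ℂ) • (1 : Matrix (Fin N) (Fin N) ℂ)) l k := by
    rw [h2]
  rw [Matrix.mul_apply] at h5
  simp only [Matrix.conjTranspose_apply, Matrix.smul_apply, Matrix.one_apply, smul_eq_mul] at h5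
  calc ∑ s, Complex.exp (Complex.I * (m s) * ((n k : ℂ) - (n l)))
      = ∑ s, star (H s l) * H s k := by
        refine Finset.sum_congr rfl fun s _ => ?_
        rw [hH, hH, star_exp_aux, ← Complex.exp_add]
        congr 1
        ring
  _ = if k = l then (N:ℂ) else 0 := by
        rw [h5]
        by_cases h : k = l
        · rw [if_pos h, if_pos h.symm, mul_one]
        · rw [if_neg h, if_neg (fun hh => h hh.symm), mul_zero]

private lemma keySum {N : ℕ} (hN : 1 ≤ N) (m n : Fin N → ℝ)
    (H : Matrix (Fin N) (Fin N) ℂ)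
    (hH : ∀ j k, H j k = Complex.exp (Complex.I * (m j) * (n k)))
    (horth : ∀ i j : Fin N, ∑ k, H i k * star (H j k) = if i = j then (N : ℂ) else 0)
    (a : ℂ) (c : Fin N → ℂ) :
    ∑ s, (∑ k, c k * Complex.exp (Complex.I * m s * n k)) *
        (∑ l, Complex.exp (Complex.I * (a - m s) * n l))
      = (N:ℂ) * ∑ k, c k * Complex.exp (Complex.I * a * n k) := by
  have hcol := colOrth hN m n H hH horth
  calc ∑ s, (∑ k, c k * Complex.exp (Complex.I * m s * n k)) *
        (∑ l, Complex.exp (Complex.I * (a - m s) * n l))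
      = ∑ s, ∑ k, ∑ l, c k * Complex.exp (Complex.I * a * n l) *
          Complex.exp (Complex.I * m s * ((n k : ℂ) - (n l))) := by
        refine Finset.sum_congr rfl fun s _ => ?_
        rw [Finset.sum_mul]
        refine Finset.sum_congr rfl fun k _ => ?_
        rw [Finset.mul_sum]
        refine Finset.sum_congr rfl fun l _ => ?_
        simp only [mul_assoc, ← Complex.exp_add]
        congr 1
        ring
  _ = ∑ k, ∑ l, c k * Complex.exp (Complex.I * a * n l) *
          ∑ s, Complex.exp (Complex.I * m s * ((n k : ℂ) - (n l))) := by
        rw [Finset.sum_comm]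
        refine Finset.sum_congr rfl fun k _ => ?_
        rw [Finset.sum_comm]
        exact Finset.sum_congr rfl fun l _ => (Finset.mul_sum _ _ _).symm
  _ = ∑ k, c k * Complex.exp (Complex.I * a * n k) * N := by
        refine Finset.sum_congr rfl fun k _ => ?_
        simp only [hcol]
        rw [Finset.sum_eq_single k]
        · rw [if_pos rfl]
        · intro l _ hlk
          rw [if_neg (fun h => hlk h.symm), mul_zero]
        · exact fun h => absurd (Finset.mem_univ k) h
  _ = (N:ℂ) * ∑ k, c k * Complex.exp (Complex.I * a * n k) := by
        rw [← Finset.sum_mul, mul_comm]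

private lemma kerLemma {N : ℕ} (hN : 1 ≤ N) (m n : Fin N → ℝ)
    (H : Matrix (Fin N) (Fin N) ℂ)
    (hH : ∀ j k, H j k = Complex.exp (Complex.I * (m j) * (n k)))
    (horth : ∀ i j : Fin N, ∑ k, H i k * star (H j k) = if i = j then (N : ℂ) else 0)
    (x : Fin N → ℂ) (hx : ∀ j, ∑ k, x k * H j k = 0) : x = 0 := by
  have hcol := colOrth hN m n H hH horth
  have hNne : (N:ℂ) ≠ 0 := Nat.cast_ne_zero.mpr (by omega)
  funext k0
  have h : ∑ j, star (H j k0) * ∑ k, x k * H j k = 0 := by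
    simp only [hx, mul_zero, Finset.sum_const_zero]
  have h2 : ∑ j, star (H j k0) * ∑ k, x k * H j k = x k0 * N := by
    calc ∑ j, star (H j k0) * ∑ k, x k * H j k
        = ∑ j, ∑ k, x k * Complex.exp (Complex.I * m j * ((n k : ℂ) - (n k0))) := by
          refine Finset.sum_congr rfl fun j _ => ?_
          rw [Finset.mul_sum]
          refine Finset.sum_congr rfl fun k _ => ?_
          rw [hH j k0, hH j k, star_exp_aux, ← mul_assoc,
            mul_comm (Complex.exp _) (x k), mul_assoc, ← Complex.exp_add]
          congr 2
          ring
      _ = ∑ k, x k * ∑ j, Complex.exp (Complex.I * m j * ((n k : ℂ) - (n k0))) := by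
          rw [Finset.sum_comm]
          exact Finset.sum_congr rfl fun k _ => (Finset.mul_sum _ _ _).symm
      _ = x k0 * N := by
          simp only [hcol]
          rw [Finset.sum_eq_single k0]
          · rw [if_pos rfl]
          · intro l _ hl
            rw [if_neg hl, mul_zero]
          · exact fun h => absurd (Finset.mem_univ k0) h
  have h3 : x k0 * N = 0 := h2.symm.trans h
  have := (mul_eq_zero.mp h3).resolve_right hNne
  simpa using this

noncomputable def phiMap (N : ℕ) (H : Matrix (Fin N) (Fin N) ℂ) :
    Matrix (Fin N) (Fin N) ℝ →ₗ[ℝ] Matrix (Fin N) (Fin N) ℂ where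
  toFun A := Matrix.of fun i s => ∑ k, (A i k : ℂ) * H s k
  map_add' A B := by
    ext i s
    simp only [Matrix.of_apply, Matrix.add_apply]
    push_cast
    rw [← Finset.sum_add_distrib]
    exact Finset.sum_congr rfl fun k _ => by ring
  map_smul' c A := by
    ext i s
    simp only [Matrix.of_apply, Matrix.smul_apply, smul_eq_mul, RingHom.id_apply,
      Complex.real_smul]
    push_cast
    rw [Finset.mul_sum]
    exact Finset.sum_congr rfl fun k _ => by ring


/-- for a master Hadamard matrix `H_{jk} = e^{i m_j n_k}`, the defect of
`H` equals the real dimension of `{B : conj(B) = (1/N) B L, (BR)_{i,ij} = (BR)_{j,ij}}`,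
where `L_{ij} = ∑_k e^{−i(m_i+m_j) n_k}` and `R_{s,(i,j)} = ∑_l e^{i(m_i−m_s−m_j) n_l}`. -/
theorem stmt_13 (N : ℕ) (hN : 1 ≤ N) (m n : Fin N → ℝ)
    (H : Matrix (Fin N) (Fin N) ℂ)
    (hH : ∀ j k, H j k = Complex.exp (Complex.I * (m j) * (n k)))
    (horth : ∀ i j : Fin N, ∑ k, H i k * star (H j k) = if i = j then (N : ℂ) else 0) :
    defect H = Module.finrank ℝ
      (masterSpace N
        (Matrix.of fun i j => ∑ k, Complex.exp (-Complex.I * ((m i) + (m j)) * (n k)))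
        (fun s i j => ∑ l, Complex.exp (Complex.I * ((m i) - (m s) - (m j)) * (n l)))) := by
  classical
  have hNne : (N:ℂ) ≠ 0 := Nat.cast_ne_zero.mpr (by omega)
  have key := keySum hN m n H hH horth
  set L : Matrix (Fin N) (Fin N) ℂ :=
    Matrix.of fun i j => ∑ k, Complex.exp (-Complex.I * ((m i : ℂ) + (m j)) * (n k)) with hLdef
  set Rf : Fin N → Fin N → Fin N → ℂ :=
    fun s i j => ∑ l, Complex.exp (Complex.I * ((m i : ℂ) - (m s) - (m j)) * (n l)) with hRdef
  set Φ : Matrix (Fin N) (Fin N) ℝ →ₗ[ℝ] Matrix (Fin N) (Fin N) ℂ := phiMap N H with hPhidef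
  have hΦ : ∀ (A : Matrix (Fin N) (Fin N) ℝ) i s, Φ A i s = ∑ k, (A i k : ℂ) * H s k :=
    fun _ _ _ => rfl
  -- star of Φ A
  have hstarΦ : ∀ (A : Matrix (Fin N) (Fin N) ℝ) i j,
      star (Φ A i j) = ∑ k, (A i k : ℂ) * star (H j k) := by
    intro A i j
    rw [hΦ, star_sum]
    exact Finset.sum_congr rfl fun k _ => by
      rw [star_mul', Complex.star_def, Complex.conj_ofReal]
  -- key computation for R sums
  have hkey2 : ∀ (A : Matrix (Fin N) (Fin N) ℝ) (i' i j : Fin N),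
      ∑ s, Φ A i' s * Rf s i j
        = (N:ℂ) * ∑ k, (A i' k : ℂ) * Complex.exp (Complex.I * ((m i : ℂ) - (m j)) * (n k)) := by
    intro A i' i j
    rw [← key ((m i : ℂ) - (m j)) (fun k => (A i' k : ℂ))]
    refine Finset.sum_congr rfl fun s _ => ?_
    congr 1
    · rw [hΦ]
      exact Finset.sum_congr rfl fun k _ => by rw [hH]
    · exact Finset.sum_congr rfl fun l _ => congrArg Complex.exp (by ring)
  -- key computation for L
  have hkey1 : ∀ (A : Matrix (Fin N) (Fin N) ℝ) (i j : Fin N),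
      (Φ A * L) i j = (N:ℂ) * ∑ k, (A i k : ℂ) * star (H j k) := by
    intro A i j
    rw [Matrix.mul_apply]
    calc ∑ s, Φ A i s * L s j
        = ∑ s, (∑ k, (A i k : ℂ) * Complex.exp (Complex.I * m s * n k)) *
            (∑ l, Complex.exp (Complex.I * ((-(m j) : ℂ) - m s) * n l)) := by
          refine Finset.sum_congr rfl fun s _ => ?_
          congr 1
          · rw [hΦ]
            exact Finset.sum_congr rfl fun k _ => by rw [hH]
          · rw [hLdef]
            simp only [Matrix.of_apply]
            exact Finset.sum_congr rfl fun l _ => congrArg Complex.exp (by ring)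
      _ = (N:ℂ) * ∑ k, (A i k : ℂ) * Complex.exp (Complex.I * (-(m j) : ℂ) * n k) :=
          key (-(m j) : ℂ) (fun k => (A i k : ℂ))
      _ = (N:ℂ) * ∑ k, (A i k : ℂ) * star (H j k) := by
          congr 1
          refine Finset.sum_congr rfl fun k _ => ?_
          rw [hH, star_exp_aux]
          congr 1
          ring
  -- exp form of H i k * star (H j k)
  have hE : ∀ (i j k : Fin N), H i k * star (H j k)
      = Complex.exp (Complex.I * ((m i : ℂ) - (m j)) * (n k)) := by
    intro i j k
    rw [hH i k, hH j k, star_exp_aux, ← Complex.exp_add]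
    congr 1
    ring
  have hinj : Function.Injective Φ := by
    rw [← LinearMap.ker_eq_bot]
    refine (Submodule.eq_bot_iff _).mpr fun A hA => ?_
    have hA0 : Φ A = 0 := hA
    ext i k
    have hx : (fun k => ((A i k : ℂ))) = 0 := by
      refine kerLemma hN m n H hH horth _ fun j => ?_
      rw [← hΦ A i j, hA0]
      simp
    have := congrFun hx k
    simpa using this
  have himg : Submodule.map Φ (defectSubmodule H) = masterSpace N L Rf := by
    apply le_antisymm
    · rintro B ⟨A, hA, rfl⟩
      have hA' : ∀ i j, ∑ k, H i k * star (H j k) * ((A i k : ℂ) - (A j k : ℂ)) = 0 := hA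
      constructor
      · intro i j
        rw [hstarΦ A i j, hkey1 A i j, ← mul_assoc, one_div, inv_mul_cancel₀ hNne, one_mul]
      · intro i j
        rw [hkey2 A i i j, hkey2 A j i j]
        congr 1
        rw [← sub_eq_zero, ← Finset.sum_sub_distrib]
        calc ∑ k, ((A i k : ℂ) * Complex.exp (Complex.I * ((m i : ℂ) - (m j)) * (n k))
              - (A j k : ℂ) * Complex.exp (Complex.I * ((m i : ℂ) - (m j)) * (n k)))
            = ∑ k, H i k * star (H j k) * ((A i k : ℂ) - (A j k : ℂ)) := by
              refine Finset.sum_congr rfl fun k _ => ?_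
              rw [hE i j k]
              ring
          _ = 0 := hA' i j
    · rintro B ⟨hB1, hB2⟩
      set A' : Fin N → Fin N → ℂ := fun i k => (N:ℂ)⁻¹ * ∑ s, B i s * star (H s k) with hA'def
      have hBA : ∀ i t, ∑ k, A' i k * H t k = B i t := by
        intro i t
        calc ∑ k, A' i k * H t k
            = ∑ k, ∑ s, (N:ℂ)⁻¹ * (B i s * (H t k * star (H s k))) := by
              refine Finset.sum_congr rfl fun k _ => ?_
              show ((N:ℂ)⁻¹ * ∑ s, B i s * star (H s k)) * H t k = _
              rw [mul_assoc, Finset.sum_mul, Finset.mul_sum]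
              exact Finset.sum_congr rfl fun s _ => by ring
          _ = ∑ s, ∑ k, (N:ℂ)⁻¹ * (B i s * (H t k * star (H s k))) := Finset.sum_comm
          _ = ∑ s, (N:ℂ)⁻¹ * (B i s * ∑ k, H t k * star (H s k)) := by
              refine Finset.sum_congr rfl fun s _ => ?_
              rw [Finset.mul_sum Finset.univ (fun k => H t k * star (H s k)) (B i s),
                Finset.mul_sum Finset.univ (fun k => B i s * (H t k * star (H s k))) ((N:ℂ)⁻¹)]
          _ = ∑ s, (N:ℂ)⁻¹ * (B i s * if t = s then (N:ℂ) else 0) := by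
              refine Finset.sum_congr rfl fun s _ => by rw [horth t s]
          _ = B i t := by
              rw [Finset.sum_eq_single t]
              · rw [if_pos rfl]
                field_simp
              · intro s _ hst
                rw [if_neg (fun h => hst h.symm), mul_zero, mul_zero]
              · exact fun h => absurd (Finset.mem_univ t) h
      have hstarB : ∀ i j, star (B i j) = ∑ l, A' i l * star (H j l) := by
        intro i j
        have hBL : (B * L) i j = (N:ℂ) * ∑ l, A' i l * star (H j l) := by
          rw [Matrix.mul_apply]
          calc ∑ s, B i s * L s j
              = ∑ s, ∑ l, B i s * (star (H s l) * star (H j l)) := by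
                refine Finset.sum_congr rfl fun s _ => ?_
                rw [hLdef]
                simp only [Matrix.of_apply]
                rw [Finset.mul_sum]
                refine Finset.sum_congr rfl fun l _ => ?_
                congr 1
                rw [hH s l, hH j l, star_exp_aux, star_exp_aux, ← Complex.exp_add]
                congr 1
                ring
            _ = ∑ l, ∑ s, B i s * (star (H s l) * star (H j l)) := Finset.sum_comm
            _ = ∑ l, (∑ s, B i s * star (H s l)) * star (H j l) := by
                refine Finset.sum_congr rfl fun l _ => ?_
                rw [Finset.sum_mul]
                exact Finset.sum_congr rfl fun s _ => by ring
            _ = ∑ l, ((N:ℂ) * A' i l) * star (H j l) := by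
                refine Finset.sum_congr rfl fun l _ => ?_
                congr 1
                show _ = (N:ℂ) * ((N:ℂ)⁻¹ * _)
                rw [← mul_assoc, mul_inv_cancel₀ hNne, one_mul]
            _ = (N:ℂ) * ∑ l, A' i l * star (H j l) := by
                rw [Finset.mul_sum Finset.univ (fun l => A' i l * star (H j l)) ((N:ℂ))]
                exact Finset.sum_congr rfl fun l _ => mul_assoc _ _ _
        rw [hB1 i j, hBL, ← mul_assoc, one_div, inv_mul_cancel₀ hNne, one_mul]
      have hreal : ∀ i k, (((A' i k).re : ℂ)) = A' i k := by
        intro i k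
        have e1 : ∀ j, ∑ k, star (A' i k) * H j k = B i j := by
          intro j
          calc ∑ k, star (A' i k) * H j k
              = star (∑ l, A' i l * star (H j l)) := by
                rw [star_sum]
                exact Finset.sum_congr rfl fun l _ => by
                  rw [star_mul' (A' i l) (star (H j l)), star_star]
            _ = star (star (B i j)) := by rw [hstarB i j]
            _ = B i j := star_star _
        have hz : (fun k => A' i k - star (A' i k)) = 0 := by
          refine kerLemma hN m n H hH horth _ fun j => ?_
          calc ∑ k, (A' i k - star (A' i k)) * H j k
              = (∑ k, A' i k * H j k) - ∑ k, star (A' i k) * H j k := by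
                rw [← Finset.sum_sub_distrib]
                exact Finset.sum_congr rfl fun k _ => by ring
            _ = 0 := by rw [hBA i j, e1 j, sub_self]
        have h4 := congrFun hz k
        simp only [Pi.zero_apply, sub_eq_zero] at h4
        exact Complex.conj_eq_iff_re.mp h4.symm
      refine ⟨Matrix.of fun i k => (A' i k).re, ?_, ?_⟩
      · -- membership in defectSubmodule
        intro i j
        have hAB : Φ (Matrix.of fun i k => (A' i k).re) = B := by
          ext i' t
          rw [hΦ]
          calc ∑ k, (((A' i' k).re : ℂ)) * H t k = ∑ k, A' i' k * H t k :=
                Finset.sum_congr rfl fun k _ => by rw [hreal i' k]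
            _ = B i' t := hBA i' t
        have h2 := hB2 i j
        rw [← hAB] at h2
        rw [hkey2 _ i i j, hkey2 _ j i j] at h2
        have h3 := mul_left_cancel₀ hNne h2
        simp only [Matrix.of_apply] at h3
        calc ∑ k, H i k * star (H j k) *
              (((Matrix.of fun i k => (A' i k).re) i k : ℂ) - ((Matrix.of fun i k => (A' i k).re) j k : ℂ))
            = (∑ k, ((A' i k).re : ℂ) * Complex.exp (Complex.I * ((m i : ℂ) - (m j)) * (n k)))
              - ∑ k, ((A' j k).re : ℂ) * Complex.exp (Complex.I * ((m i : ℂ) - (m j)) * (n k)) := by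
              rw [← Finset.sum_sub_distrib]
              refine Finset.sum_congr rfl fun k _ => ?_
              rw [hE i j k]
              simp only [Matrix.of_apply]
              ring
          _ = 0 := by rw [h3, sub_self]
      · -- Φ A = B
        ext i' t
        rw [hΦ]
        calc ∑ k, (((Matrix.of fun i k => (A' i k).re) i' k : ℝ) : ℂ) * H t k
            = ∑ k, A' i' k * H t k := Finset.sum_congr rfl fun k _ => by
              simp only [Matrix.of_apply]; rw [hreal i' k]
          _ = B i' t := hBA i' t
  have hfr : defect H = Module.finrank ℝ (Submodule.map Φ (defectSubmodule H)) :=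
    (Submodule.equivMapOfInjective Φ hinj (defectSubmodule H)).finrank_eq
  rw [hfr, himg]
end

section
/- Let K ∈ M_{M×N}(ℂ) be a partial complex Hadamard matrix, let Q ≥ 1, and let L_1,…,L_M ∈ M_Q(ℂ) and R_1,…,R_N ∈ M_Q(ℂ) be matrices satisfying L_i·L_i* = Q·1_Q and R_j·R_j* = Q·1_Q for all i,j, such that for every 1 ≤ i ≤ M and 1 ≤ j ≤ N all entries of the matrix (1/√Q)·L_i*·R_j have modulus 1. Then the matrix H ∈ M_{MQ×NQ}(ℂ), defined on pairs of indices by H_{(i,a),(j,b)} = (1/√Q)·K_{ij}·(L_i*·R_j)_{ab}, is a partial complex Hadamard matrix. -/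
/-- McNulty–Weigert construction: if `K ∈ M_{M×N}(ℂ)` is partial Hadamard
and `L_1,…,L_M, R_1,…,R_N ∈ √Q·U_Q` are such that each `(1/√Q)·L_i*·R_j` has unit-modulus
entries, then `H_{(i,a),(j,b)} = (1/√Q)·K_{ij}·(L_i*·R_j)_{ab}` is partial Hadamard. -/
theorem stmt_14 (M N Q : ℕ) (hQ : 1 ≤ Q)
    (K : Matrix (Fin M) (Fin N) ℂ)
    (hKmod : ∀ i j, ‖K i j‖ = 1)
    (hKorth : ∀ i j : Fin M, ∑ k, K i k * star (K j k) = if i = j then (N : ℂ) else 0)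
    (L : Fin M → Matrix (Fin Q) (Fin Q) ℂ)
    (R : Fin N → Matrix (Fin Q) (Fin Q) ℂ)
    (hL : ∀ i, L i * (L i).conjTranspose = (Q : ℂ) • (1 : Matrix (Fin Q) (Fin Q) ℂ))
    (hR : ∀ j, R j * (R j).conjTranspose = (Q : ℂ) • (1 : Matrix (Fin Q) (Fin Q) ℂ))
    (hmod : ∀ (i : Fin M) (j : Fin N) (a b : Fin Q),
      ‖(1 / (Real.sqrt Q : ℂ)) * ((L i).conjTranspose * R j) a b‖ = 1)
    (H : Matrix (Fin M × Fin Q) (Fin N × Fin Q) ℂ)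
    (hH : ∀ (i : Fin M) (a : Fin Q) (j : Fin N) (b : Fin Q),
      H (i, a) (j, b) = (1 / (Real.sqrt Q : ℂ)) * K i j * ((L i).conjTranspose * R j) a b) :
    (∀ (x : Fin M × Fin Q) (y : Fin N × Fin Q), ‖H x y‖ = 1) ∧
    (∀ x y : Fin M × Fin Q,
      ∑ z : Fin N × Fin Q, H x z * star (H y z) =
        if x = y then ((N * Q : ℕ) : ℂ) else 0) := by
  have hQ0 : (Q : ℂ) ≠ 0 := Nat.cast_ne_zero.mpr (by omega)
  have hsq : ((Real.sqrt Q : ℝ) : ℂ) * ((Real.sqrt Q : ℝ) : ℂ) = (Q : ℂ) := by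
    have : Real.sqrt Q * Real.sqrt Q = (Q : ℝ) :=
      Real.mul_self_sqrt (by positivity)
    rw [← Complex.ofReal_mul, this]; norm_cast
  set c : ℂ := 1 / ((Real.sqrt Q : ℝ) : ℂ) with hc
  have hcstar : star c = c := by
    rw [hc, star_div₀, star_one]
    congr 1
    exact Complex.conj_ofReal _
  have hcc : c * c = 1 / (Q : ℂ) := by
    rw [hc, div_mul_div_comm, one_mul, hsq]
  have hL' : ∀ i, (L i).conjTranspose * L i = (Q : ℂ) • 1 := by
    intro i
    have h1 : L i * ((Q : ℂ)⁻¹ • (L i).conjTranspose) = 1 := by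
      rw [Matrix.mul_smul, hL, smul_smul, inv_mul_cancel₀ hQ0, one_smul]
    have h2 := mul_eq_one_comm.mp h1
    calc (L i).conjTranspose * L i
        = (Q : ℂ) • (((Q : ℂ)⁻¹ • (L i).conjTranspose) * L i) := by
          rw [Matrix.smul_mul, smul_smul, mul_inv_cancel₀ hQ0, one_smul]
      _ = (Q : ℂ) • 1 := by rw [h2]
  constructor
  · rintro ⟨i, a⟩ ⟨j, b⟩
    rw [hH]
    have : c * K i j * ((L i).conjTranspose * R j) a b
        = K i j * (c * ((L i).conjTranspose * R j) a b) := by ring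
    rw [this, norm_mul, hKmod, hmod, one_mul]
  · rintro ⟨i, a⟩ ⟨i', a'⟩
    rw [Fintype.sum_prod_type]
    have key : ∀ j : Fin N, ∑ b, H (i, a) (j, b) * star (H (i', a') (j, b))
        = (K i j * star (K i' j)) * ((L i).conjTranspose * L i') a a' := by
      intro j
      have hA : ∑ b, ((L i).conjTranspose * R j) a b
            * star (((L i').conjTranspose * R j) a' b)
          = (Q : ℂ) * ((L i).conjTranspose * L i') a a' := by
        have h1 : ∑ b, ((L i).conjTranspose * R j) a b
              * star (((L i').conjTranspose * R j) a' b)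
            = (((L i).conjTranspose * R j)
                * ((L i').conjTranspose * R j).conjTranspose) a a' := by
          simp [Matrix.mul_apply, Matrix.conjTranspose_apply, mul_comm]
        rw [h1, Matrix.conjTranspose_mul, Matrix.conjTranspose_conjTranspose,
          Matrix.mul_assoc, ← Matrix.mul_assoc (R j), hR, Matrix.smul_mul,
          Matrix.one_mul, Matrix.mul_smul, Matrix.smul_apply, smul_eq_mul]
      have hterm : ∀ b, H (i, a) (j, b) * star (H (i', a') (j, b))
          = (c * c) * ((K i j * star (K i' j))
            * (((L i).conjTranspose * R j) a b
              * star (((L i').conjTranspose * R j) a' b))) := by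
        intro b
        rw [hH, hH, star_mul', star_mul', hcstar]
        ring
      rw [Finset.sum_congr rfl fun b _ => hterm b, ← Finset.mul_sum,
        ← Finset.mul_sum, hA, hcc]
      field_simp
    rw [Finset.sum_congr rfl fun j _ => key j, ← Finset.sum_mul, hKorth]
    by_cases hii : i = i'
    · subst hii
      rw [if_pos rfl, hL', Matrix.smul_apply, Matrix.one_apply, smul_eq_mul]
      by_cases haa : a = a'
      · subst haa
        simp
      · simp [haa, Prod.ext_iff]
    · simp [hii, Prod.ext_iff]
end

section
/- Let q ≥ 3 be a prime, w = e^{2πi/q}, let F_q = (w^{ij})_{i,j∈ℤ/qℤ} be the Fourier matrix, and let D ∈ M_q(ℂ) be the diagonal matrix with D_{cc} = w^{c(c−1)/2} for c ∈ ℤ/qℤ (the exponent c(c−1)/2 computed in ℤ/qℤ, where division by 2 is inversion of 2 modulo q). Then for every integer k with k ≢ 0 (mod q), every entry of the matrix (1/√q)·F_q*·D^k·F_q has modulus 1; consequently (1/√q)·F_q*·D^k·F_q, being √q times a unitary matrix with unit-modulus entries, is a complex Hadamard matrix. Equivalently, setting E_i = D^i·F_q for 0 ≤ i ≤ q−1,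 the matrix (1/√q)·E_i*·E_j is complex Hadamard for all i ≠ j. -/
open Matrix Finset

section Aux

variable {q : ℕ} [NeZero q] {w : ℂ}

/-- The additive character `x ↦ w ^ x.val` on `ZMod q`. -/
private noncomputable def zch (w : ℂ) (x : ZMod q) : ℂ := w ^ x.val

private lemma zch_natCast (hw : w ^ q = 1) (n : ℕ) : zch w ((n : ZMod q)) = w ^ n := by
  unfold zch
  rw [ZMod.val_natCast]
  conv_rhs => rw [← Nat.div_add_mod n q]
  rw [pow_add, pow_mul, hw, one_pow, one_mul]

private lemma zch_add (hw : w ^ q = 1) (x y : ZMod q) :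
    zch w (x + y) = zch w x * zch w y := by
  have hx : ((x.val : ℕ) : ZMod q) = x := by simp [ZMod.natCast_val, ZMod.cast_id]
  have hy : ((y.val : ℕ) : ZMod q) = y := by simp [ZMod.natCast_val, ZMod.cast_id]
  have h : x + y = ((x.val + y.val : ℕ) : ZMod q) := by rw [Nat.cast_add, hx, hy]
  rw [h, zch_natCast hw, pow_add]; rfl

private lemma zch_zero : zch (q := q) w 0 = 1 := by
  unfold zch; simp

private lemma zch_pow (hw : w ^ q = 1) (n : ℕ) (x : ZMod q) :
    zch w x ^ n = zch w ((n : ZMod q) * x) := by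
  induction n with
  | zero => simp [zch_zero]
  | succ m ih =>
      have : ((m + 1 : ℕ) : ZMod q) * x = (m : ZMod q) * x + x := by push_cast; ring
      rw [pow_succ, ih, this, zch_add hw]

private lemma zch_ne_zero (hprim : IsPrimitiveRoot w q) (x : ZMod q) : zch w x ≠ 0 := by
  have hw0 : w ≠ 0 := by
    intro h
    have := hprim.pow_eq_one
    rw [h, zero_pow (NeZero.ne q)] at this
    exact zero_ne_one this
  exact pow_ne_zero _ hw0

private lemma zch_star (hprim : IsPrimitiveRoot w q) (x : ZMod q) :
    star (zch w x) = zch w (-x) := by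
  have hw : w ^ q = 1 := hprim.pow_eq_one
  have habs : ‖w‖ = 1 := hprim.norm'_eq_one (NeZero.ne q)
  have h1 : zch w x * zch w (-x) = 1 := by
    rw [← zch_add hw, add_neg_cancel, zch_zero]
  have h2 : zch w x * star (zch w x) = 1 := by
    rw [show star (zch w x) = (starRingEnd ℂ) (zch w x) from rfl, Complex.mul_conj]
    norm_cast
    rw [Complex.normSq_eq_norm_sq]
    unfold zch
    rw [norm_pow, habs, one_pow, one_pow]
  exact mul_left_cancel₀ (zch_ne_zero hprim x) (h2.trans h1.symm)

private lemma zch_sum (hprim : IsPrimitiveRoot w q) (u : ZMod q) :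
    ∑ d : ZMod q, zch w (u * d) = if u = 0 then (q : ℂ) else 0 := by
  have hw : w ^ q = 1 := hprim.pow_eq_one
  by_cases hu : u = 0
  · simp [hu, zch_zero, ZMod.card]
  · have hne : zch w u ≠ 1 := by
      have h0 : 0 < u.val := Nat.pos_of_ne_zero fun h => hu ((ZMod.val_eq_zero u).mp h)
      exact hprim.pow_ne_one_of_pos_of_lt h0.ne' (ZMod.val_lt u)
    have hshift : ∑ d : ZMod q, zch w (u * d) = ∑ d : ZMod q, zch w (u * (d + 1)) :=
      (Fintype.sum_equiv (Equiv.addRight 1) _ _ (fun d => rfl)).symm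
    have h2 : ∑ d : ZMod q, zch w (u * (d + 1)) =
        (∑ d : ZMod q, zch w (u * d)) * zch w u := by
      rw [Finset.sum_mul]
      refine Finset.sum_congr rfl fun d _ => ?_
      rw [← zch_add hw]; ring_nf
    have h3 : (∑ d : ZMod q, zch w (u * d)) * (zch w u - 1) = 0 := by
      rw [mul_sub, mul_one, sub_eq_zero, ← h2, ← hshift]
    rcases mul_eq_zero.mp h3 with h | h
    · simp [hu, h]
    · exact absurd (sub_eq_zero.mp h) hne
      
end Aux

/-- for a prime `q ≥ 3`, `w = e^{2πi/q}`, `F_q = (w^{ij})`, and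
`D = diag(w^{c(c−1)/2})`, every entry of `(1/√q)·F_q*·D^k·F_q` has modulus 1 for `q ∤ k`,
and this matrix is complex Hadamard; equivalently, with `E_i = D^i·F_q`, the matrix
`(1/√q)·E_i*·E_j` is complex Hadamard for all `i ≠ j`. -/
theorem stmt_15 (q : ℕ) [Fact (Nat.Prime q)] (hq3 : 3 ≤ q)
    (w : ℂ) (hw : w = Complex.exp (2 * Real.pi * Complex.I / q))
    (F : Matrix (ZMod q) (ZMod q) ℂ) (hF : ∀ i j : ZMod q, F i j = w ^ (i * j).val)
    (D : Matrix (ZMod q) (ZMod q) ℂ)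
    (hD : D = Matrix.diagonal fun c : ZMod q => w ^ (c * (c - 1) * (2 : ZMod q)⁻¹).val) :
    (∀ k : ℕ, ¬ (q ∣ k) →
      (∀ a b : ZMod q,
        ‖(((Real.sqrt q)⁻¹ : ℂ) • (Fᴴ * D ^ k * F)) a b‖ = 1) ∧
      (∀ a c : ZMod q,
        ∑ b : ZMod q,
          (((Real.sqrt q)⁻¹ : ℂ) • (Fᴴ * D ^ k * F)) a b *
            star ((((Real.sqrt q)⁻¹ : ℂ) • (Fᴴ * D ^ k * F)) c b) =
          if a = c then (q : ℂ) else 0)) ∧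
    (∀ i j : ℕ, i < q → j < q → i ≠ j →
      (∀ a b : ZMod q,
        ‖(((Real.sqrt q)⁻¹ : ℂ) • ((D ^ i * F)ᴴ * (D ^ j * F))) a b‖ = 1) ∧
      (∀ a c : ZMod q,
        ∑ b : ZMod q,
          (((Real.sqrt q)⁻¹ : ℂ) • ((D ^ i * F)ᴴ * (D ^ j * F))) a b *
            star ((((Real.sqrt q)⁻¹ : ℂ) • ((D ^ i * F)ᴴ * (D ^ j * F))) c b) =
          if a = c then (q : ℂ) else 0)) := by
  have hq0 : q ≠ 0 := by omega
  haveI : NeZero q := ⟨hq0⟩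
  have hprim : IsPrimitiveRoot w q := by
    rw [hw]; exact Complex.isPrimitiveRoot_exp q hq0
  have hwq : w ^ q = 1 := hprim.pow_eq_one
  set e : ZMod q → ℂ := zch w with he
  have eadd : ∀ x y : ZMod q, e (x + y) = e x * e y := zch_add hwq
  have e0 : e 0 = 1 := zch_zero
  have estar : ∀ x : ZMod q, star (e x) = e (-x) := zch_star hprim
  have epow : ∀ (n : ℕ) (x : ZMod q), e x ^ n = e ((n : ZMod q) * x) := zch_pow hwq
  have esum : ∀ u : ZMod q, ∑ d : ZMod q, e (u * d) = if u = 0 then (q : ℂ) else 0 :=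
    zch_sum hprim
  -- basic facts about 2⁻¹
  have h2 : (2 : ZMod q) ≠ 0 := by
    have : ¬ (q ∣ 2) := fun h => by have := Nat.le_of_dvd (by norm_num) h; omega
    simpa [ZMod.natCast_eq_zero_iff] using
      (fun h => this ((ZMod.natCast_eq_zero_iff 2 q).mp (by exact_mod_cast h)))
  have h2i : (2 : ZMod q) * (2 : ZMod q)⁻¹ = 1 := ZMod.mul_inv_of_unit 2 (by
    exact IsUnit.mk0 _ h2)
  set t : ZMod q → ZMod q := fun c => c * (c - 1) * (2 : ZMod q)⁻¹ with ht
  have tsub : ∀ d s : ZMod q, t (d + s) - t d = d * s + t s := by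
    intro d s
    simp only [ht]
    linear_combination (d * s) * h2i
  have t0 : t 0 = 0 := by simp [ht]
  -- F and D in terms of e
  have hF' : ∀ i j : ZMod q, F i j = e (i * j) := fun i j => hF i j
  have hDk : ∀ k : ℕ, D ^ k = Matrix.diagonal (fun c => e (t c) ^ k) := by
    intro k
    rw [hD, Matrix.diagonal_pow]
    rfl
  -- entry formula
  have hA : ∀ (k : ℕ) (a b : ZMod q),
      (Fᴴ * D ^ k * F) a b = ∑ c : ZMod q, e ((k : ZMod q) * t c + c * (b - a)) := by
    intro k a b
    rw [Matrix.mul_assoc, Matrix.mul_apply]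
    refine Finset.sum_congr rfl fun c _ => ?_
    rw [Matrix.conjTranspose_apply, hDk, Matrix.diagonal_mul, hF' c a, hF' c b,
      estar (c * a), epow]
    rw [← eadd, ← eadd]
    congr 1
    ring
  -- master lemma
  have master : ∀ k : ℕ, (k : ZMod q) ≠ 0 →
      (∀ a b : ZMod q,
        ‖(((Real.sqrt q)⁻¹ : ℂ) • (Fᴴ * D ^ k * F)) a b‖ = 1) ∧
      (∀ a c : ZMod q,
        ∑ b : ZMod q,
          (((Real.sqrt q)⁻¹ : ℂ) • (Fᴴ * D ^ k * F)) a b *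
            star ((((Real.sqrt q)⁻¹ : ℂ) • (Fᴴ * D ^ k * F)) c b) =
          if a = c then (q : ℂ) else 0) := by
    intro k hk
    set k' : ZMod q := (k : ZMod q) with hk'
    have hqC : ((q : ℝ) : ℂ) = (q : ℂ) := by push_cast; ring
    have hqpos : (0 : ℝ) < q := by positivity
    have hsq : Real.sqrt q ≠ 0 := Real.sqrt_ne_zero'.mpr hqpos
    -- norm of entries
    have hnorm : ∀ a b : ZMod q,
        (Fᴴ * D ^ k * F) a b * star ((Fᴴ * D ^ k * F) a b) = (q : ℂ) := by
      intro a b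
      rw [hA]
      set f : ZMod q → ZMod q := fun c => k' * t c + c * (b - a) with hf
      rw [star_sum, Finset.sum_mul_sum]
      have step1 : ∀ c d : ZMod q, e (f c) * star (e (f d)) = e (f c - f d) := by
        intro c d
        rw [estar, ← eadd, sub_eq_add_neg]
      calc ∑ c : ZMod q, ∑ d : ZMod q, e (f c) * star (e (f d))
          = ∑ d : ZMod q, ∑ c : ZMod q, e (f c - f d) := by
            rw [Finset.sum_comm]
            exact Finset.sum_congr rfl fun c _ => Finset.sum_congr rfl fun d _ => step1 d c
        _ = ∑ d : ZMod q, ∑ s : ZMod q, e ((k' * s) * d) * e (f s) := by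
            refine Finset.sum_congr rfl fun d _ => ?_
            refine (Fintype.sum_equiv (Equiv.addLeft d) _ _ fun s => ?_).symm
            rw [← eadd]
            show e ((k' * s) * d + f s) = e (f (d + s) - f d)
            congr 1
            have h := tsub d s
            simp only [hf]
            linear_combination (-k') * h
        _ = ∑ s : ZMod q, e (f s) * ∑ d : ZMod q, e ((k' * s) * d) := by
            rw [Finset.sum_comm]
            refine Finset.sum_congr rfl fun s _ => ?_
            rw [Finset.mul_sum]
            exact Finset.sum_congr rfl fun d _ => by ring
        _ = ∑ s : ZMod q, if s = 0 then e (f s) * (q : ℂ) else 0 := by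
            refine Finset.sum_congr rfl fun s _ => ?_
            rw [esum]
            by_cases hs : s = 0
            · simp [hs]
            · have : k' * s ≠ 0 := mul_ne_zero hk hs
              simp [hs, this]
        _ = e (f 0) * (q : ℂ) := by
            rw [Finset.sum_ite_eq' Finset.univ (0 : ZMod q) (fun s => e (f s) * (q : ℂ))]
            simp
        _ = (q : ℂ) := by
            have : f 0 = 0 := by simp [hf, t0]
            rw [this, e0, one_mul]
    -- abs of entries
    have habs : ∀ a b : ZMod q, ‖(Fᴴ * D ^ k * F) a b‖ = Real.sqrt q := by
      intro a b
      have h1 := hnorm a b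
      rw [show star ((Fᴴ * D ^ k * F) a b) = (starRingEnd ℂ) ((Fᴴ * D ^ k * F) a b) from rfl,
        Complex.mul_conj] at h1
      have h2 : Complex.normSq ((Fᴴ * D ^ k * F) a b) = (q : ℝ) := by
        have := h1
        rw [← hqC] at this
        exact_mod_cast this
      rw [Complex.norm_def, h2]
    constructor
    · intro a b
      rw [Matrix.smul_apply, smul_eq_mul, norm_mul, habs]
      have : ‖(((Real.sqrt q)⁻¹ : ℂ))‖ = (Real.sqrt q)⁻¹ := by
        rw [norm_inv, Complex.norm_real, Real.norm_eq_abs, abs_of_nonneg (Real.sqrt_nonneg _)]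
      rw [this, inv_mul_cancel₀ hsq]
    · intro a c
      -- orthogonality
      have horth : ∑ b : ZMod q,
          (Fᴴ * D ^ k * F) a b * star ((Fᴴ * D ^ k * F) c b) =
          if a = c then (q : ℂ) ^ 2 else 0 := by
        have hterm : ∀ b x y : ZMod q,
            e (k' * t x + x * (b - a)) * star (e (k' * t y + y * (b - c))) =
            e ((k' * t x - x * a) - (k' * t y - y * c)) * e ((x - y) * b) := by
          intro b x y
          rw [estar, ← eadd, ← eadd]
          congr 1
          ring
        calc ∑ b : ZMod q, (Fᴴ * D ^ k * F) a b * star ((Fᴴ * D ^ k * F) c b)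
            = ∑ b : ZMod q, ∑ x : ZMod q, ∑ y : ZMod q,
                e ((k' * t x - x * a) - (k' * t y - y * c)) * e ((x - y) * b) := by
              refine Finset.sum_congr rfl fun b _ => ?_
              rw [hA, hA, star_sum, Finset.sum_mul_sum]
              exact Finset.sum_congr rfl fun x _ => Finset.sum_congr rfl fun y _ =>
                hterm b x y
          _ = ∑ x : ZMod q, ∑ y : ZMod q,
                e ((k' * t x - x * a) - (k' * t y - y * c)) * ∑ b : ZMod q, e ((x - y) * b) := by
              rw [Finset.sum_comm]
              refine Finset.sum_congr rfl fun x _ => ?_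
              rw [Finset.sum_comm]
              refine Finset.sum_congr rfl fun y _ => ?_
              rw [Finset.mul_sum]
          _ = ∑ x : ZMod q, ∑ y : ZMod q,
                if y = x then e (x * (c - a)) * (q : ℂ) else 0 := by
              refine Finset.sum_congr rfl fun x _ => Finset.sum_congr rfl fun y _ => ?_
              rw [esum]
              by_cases hxy : y = x
              · have hxy0 : x - y = 0 := by rw [hxy, sub_self]
                rw [hxy0, if_pos rfl, if_pos hxy, hxy]
                have harg : (k' * t x - x * a) - (k' * t x - x * c) = x * (c - a) := by
                  ring
                rw [harg]
              · have : x - y ≠ 0 := fun h => hxy (by linear_combination -h)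
                simp [hxy, this]
          _ = ∑ x : ZMod q, e (x * (c - a)) * (q : ℂ) := by
              refine Finset.sum_congr rfl fun x _ => ?_
              rw [Finset.sum_ite_eq' Finset.univ x (fun _ => e (x * (c - a)) * (q : ℂ))]
              simp
          _ = (if a = c then (q : ℂ) else 0) * (q : ℂ) := by
              rw [← Finset.sum_mul]
              have : ∑ x : ZMod q, e (x * (c - a)) = if a = c then (q : ℂ) else 0 := by
                have hh : ∀ x : ZMod q, x * (c - a) = (c - a) * x := fun x => by ring
                simp_rw [hh]
                rw [esum]
                by_cases hac : a = c
                · simp [hac]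
                · have : c - a ≠ 0 := fun h => hac (by linear_combination -h)
                  simp [hac, this]
              rw [this]
          _ = if a = c then (q : ℂ) ^ 2 else 0 := by
              by_cases hac : a = c <;> simp [hac] <;> ring
      have hscalar : (((Real.sqrt q)⁻¹ : ℂ)) * star (((Real.sqrt q)⁻¹ : ℂ)) = (q : ℂ)⁻¹ := by
        have h1 : star (((Real.sqrt q : ℝ) : ℂ)) = ((Real.sqrt q : ℝ) : ℂ) :=
          Complex.conj_ofReal _
        rw [star_inv₀, h1, ← mul_inv, ← Complex.ofReal_mul,
          Real.mul_self_sqrt (le_of_lt hqpos), hqC]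
      calc ∑ b : ZMod q,
            (((Real.sqrt q)⁻¹ : ℂ) • (Fᴴ * D ^ k * F)) a b *
              star ((((Real.sqrt q)⁻¹ : ℂ) • (Fᴴ * D ^ k * F)) c b)
          = (((Real.sqrt q)⁻¹ : ℂ) * star (((Real.sqrt q)⁻¹ : ℂ))) *
              ∑ b : ZMod q, (Fᴴ * D ^ k * F) a b * star ((Fᴴ * D ^ k * F) c b) := by
            rw [Finset.mul_sum]
            refine Finset.sum_congr rfl fun b _ => ?_
            simp only [Matrix.smul_apply, smul_eq_mul, star_mul']
            ring
        _ = if a = c then (q : ℂ) else 0 := by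
            rw [horth, hscalar]
            by_cases hac : a = c
            · simp only [hac, if_pos rfl, if_true]
              have hqne : (q : ℂ) ≠ 0 := by
                exact_mod_cast Nat.cast_ne_zero.mpr hq0
              field_simp
            · simp [hac]
  constructor
  · intro k hdvd
    refine master k ?_
    intro h
    exact hdvd ((ZMod.natCast_eq_zero_iff k q).mp h)
  · intro i j hi hj hij
    -- rewrite (D^i F)ᴴ (D^j F) as Fᴴ D^m F with m = (q-1)*i + j
    have hDH : Dᴴ = D ^ (q - 1) := by
      rw [hD, Matrix.diagonal_conjTranspose, Matrix.diagonal_pow]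
      refine congrArg Matrix.diagonal ?_
      funext c
      simp only [Pi.star_apply, Pi.pow_apply]
      show star (e (t c)) = e (t c) ^ (q - 1)
      rw [estar, epow]
      congr 1
      have : ((q - 1 : ℕ) : ZMod q) = -1 := by
        have h1 : (1:ℕ) ≤ q := by omega
        push_cast [Nat.cast_sub h1]
        simp
      rw [this]
      ring
    have hE : (D ^ i * F)ᴴ * (D ^ j * F) = Fᴴ * D ^ ((q - 1) * i + j) * F := by
      rw [Matrix.conjTranspose_mul, Matrix.conjTranspose_pow, hDH, ← pow_mul]
      rw [Matrix.mul_assoc, ← Matrix.mul_assoc (D ^ ((q-1) * i)), ← pow_add,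
        ← Matrix.mul_assoc]
    have hm : (((q - 1) * i + j : ℕ) : ZMod q) ≠ 0 := by
      have h1 : (1:ℕ) ≤ q := by omega
      have hcast : (((q - 1) * i + j : ℕ) : ZMod q) = (j : ZMod q) - (i : ZMod q) := by
        push_cast [Nat.cast_sub h1]
        rw [ZMod.natCast_self]
        ring
      rw [hcast]
      intro h
      have hij' : (i : ZMod q) = (j : ZMod q) := by linear_combination -h
      have : i = j := by
        have hvi : ((i : ZMod q)).val = i := ZMod.val_cast_of_lt hi
        have hvj : ((j : ZMod q)).val = j := ZMod.val_cast_of_lt hj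
        rw [← hvi, ← hvj, hij']
      exact hij this
    have := master ((q - 1) * i + j) hm
    rw [hE]
    exact this
end

section
/- Let q ≥ 3 be a prime and let S = {s_1,…,s_M} and T = {t_1,…,t_N} be disjoint subsets of {0,1,…,q−1}. For k ∈ ℤ/qℤ with k ≠ 0, let V^k ∈ ℂ^{ℤ/qℤ} be given by V^k_i = (1/√q)·∑_{c∈ℤ/qℤ} w^{k·c(c−1)/2 + i·c}, where w = e^{2πi/q} and the exponent is computed in ℤ/qℤ. If K ∈ M_{M×N}(ℂ) is a partial complex Hadamard matrix, then the matrix H ∈ M_{Mq×Nq}(ℂ), defined on pairs of indices (1 ≤ i ≤ M, 1 ≤ j ≤ N, a,b ∈ ℤ/qℤ) by H_{(i,a),(j,b)} = K_{ij}·V^{t_j − s_i}_{b−a}, is a partial complex Hadamard matrix. -/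
/-- for a prime `q ≥ 3`, disjoint sets `S = {s_1,…,s_M}`,
`T = {t_1,…,t_N}` in `ℤ/q`, and a partial complex Hadamard matrix `K ∈ M_{M×N}(ℂ)`,
the matrix `H_{(i,a),(j,b)} = K_{ij}·V^{t_j−s_i}_{b−a}` is partial complex Hadamard,
where `V^k_i = (1/√q) ∑_c w^{k c(c−1)/2 + ic}` with `w = e^{2πi/q}`. -/
theorem stmt_17 (q : ℕ) [Fact (Nat.Prime q)] (hq3 : 3 ≤ q)
    (M N : ℕ) (s : Fin M → ZMod q) (t : Fin N → ZMod q)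
    (hs : Function.Injective s) (ht : Function.Injective t)
    (hst : ∀ i j, s i ≠ t j)
    (w : ℂ) (hw : w = Complex.exp (2 * Real.pi * Complex.I / q))
    (V : ZMod q → ZMod q → ℂ)
    (hV : ∀ k i : ZMod q,
      V k i = ((Real.sqrt q)⁻¹ : ℂ) *
        ∑ c : ZMod q, w ^ (k * c * (c - 1) * (2 : ZMod q)⁻¹ + i * c).val)
    (K : Matrix (Fin M) (Fin N) ℂ)
    (hKmod : ∀ i j, ‖K i j‖ = 1)
    (hKorth : ∀ i j : Fin M, ∑ l, K i l * star (K j l) = if i = j then (N : ℂ) else 0)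
    (H : Matrix (Fin M × ZMod q) (Fin N × ZMod q) ℂ)
    (hH : ∀ (i : Fin M) (a : ZMod q) (j : Fin N) (b : ZMod q),
      H (i, a) (j, b) = K i j * V (t j - s i) (b - a)) :
    (∀ (x : Fin M × ZMod q) (y : Fin N × ZMod q), ‖H x y‖ = 1) ∧
    (∀ x y : Fin M × ZMod q,
      ∑ z : Fin N × ZMod q, H x z * star (H y z) =
        if x = y then ((N * q : ℕ) : ℂ) else 0) := by
  have hq : Nat.Prime q := Fact.out
  have hq0 : q ≠ 0 := hq.ne_zero
  have hq1 : 1 < q := hq.one_lt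
  haveI : NeZero q := ⟨hq0⟩
  have hqC : (q : ℂ) ≠ 0 := Nat.cast_ne_zero.mpr hq0
  have hprim : IsPrimitiveRoot w q := by
    rw [hw]; exact Complex.isPrimitiveRoot_exp q hq0
  have hwq : w ^ q = 1 := hprim.pow_eq_one
  have hwne1 : w ≠ 1 := hprim.ne_one hq1
  -- the additive character
  set e : ZMod q → ℂ := fun x => w ^ x.val with he_def
  have hpowmod : ∀ n : ℕ, w ^ (n % q) = w ^ n := by
    intro n
    conv_rhs => rw [← Nat.mod_add_div n q]
    rw [pow_add, pow_mul, hwq, one_pow, mul_one]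
  have he_add : ∀ x y : ZMod q, e (x + y) = e x * e y := by
    intro x y
    simp only [he_def]
    rw [← pow_add, ← hpowmod (x.val + y.val), ZMod.val_add]
  have he_zero : e 0 = 1 := by simp [he_def]
  have he_inv : ∀ x : ZMod q, e x * e (-x) = 1 := by
    intro x; rw [← he_add]; simp [he_zero]
  have he_ne : ∀ x, e x ≠ 0 := by
    intro x h
    have h2 := he_inv x; rw [h, zero_mul] at h2; exact zero_ne_one h2
  have habsw : ‖w‖ = 1 := by
    have h : (2 * Real.pi * Complex.I / q) = ((2 * Real.pi / q : ℝ) : ℂ) * Complex.I := by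
      push_cast; ring
    rw [hw, h, Complex.norm_exp_ofReal_mul_I]
  have he_abs : ∀ x, ‖e x‖ = 1 := by
    intro x; simp only [he_def, norm_pow, habsw, one_pow]
  have he_star : ∀ x, star (e x) = e (-x) := by
    intro x
    have h1 : e x * star (e x) = 1 := by
      rw [Complex.star_def, Complex.mul_conj, Complex.normSq_eq_norm_sq, he_abs]
      norm_num
    exact mul_left_cancel₀ (he_ne x) (h1.trans (he_inv x).symm)
  -- sum of character over the whole group
  have hsum_univ : ∑ x : ZMod q, e x = 0 := by
    have h1 : ∑ x : ZMod q, e x = ∑ i ∈ Finset.range q, w ^ i := by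
      refine Finset.sum_nbij' (fun x : ZMod q => x.val) (fun n : ℕ => (n : ZMod q))
        ?_ ?_ ?_ ?_ ?_
      · intro a _; exact Finset.mem_range.mpr (ZMod.val_lt a)
      · intro a _; exact Finset.mem_univ _
      · intro a _; exact ZMod.natCast_zmod_val a
      · intro a ha; exact ZMod.val_cast_of_lt (Finset.mem_range.mp ha)
      · intro a _; rfl
    rw [h1]
    exact hprim.geom_sum_eq_zero hq1
  have hsum : ∀ k : ZMod q, ∑ x : ZMod q, e (x * k) = if k = 0 then (q : ℂ) else 0 := by
    intro k
    by_cases hk : k = 0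
    · simp [hk, he_zero, Finset.card_univ, ZMod.card]
    · rw [if_neg hk, ← hsum_univ]
      exact Fintype.sum_bijective (fun x : ZMod q => x * k)
        (Equiv.mulRight₀ k hk).bijective _ _ (fun x => rfl)
  -- quadratic part
  set g2 : ZMod q → ZMod q → ZMod q := fun k c => k * c * (c - 1) * (2 : ZMod q)⁻¹
    with hg2_def
  have h2ne : (2 : ZMod q) ≠ 0 := by
    have hnd : ¬ (q ∣ 2) := fun h => by have := Nat.le_of_dvd (by norm_num) h; omega
    have : ((2 : ℕ) : ZMod q) ≠ 0 := fun h =>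
      hnd ((ZMod.natCast_eq_zero_iff 2 q).mp h)
    simpa using this
  have hg_add : ∀ k d u : ZMod q, g2 k (d + u) = g2 k d + k * d * u + g2 k u := by
    intro k d u
    simp only [hg2_def]
    field_simp
    ring
  have hg_sub : ∀ k k' c : ZMod q, g2 k c - g2 k' c = g2 (k - k') c := by
    intro k k' c; simp only [hg2_def]; ring
  have hg_zero : ∀ k : ZMod q, g2 k 0 = 0 := by intro k; simp [hg2_def]
  have hg_zero' : ∀ c : ZMod q, g2 0 c = 0 := by intro c; simp [hg2_def]
  have hV' : ∀ k m : ZMod q, V k m = ((Real.sqrt q)⁻¹ : ℂ) * ∑ c : ZMod q, e (g2 k c + m * c) :=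
    fun k m => hV k m
  have hc : ((Real.sqrt q : ℝ) : ℂ)⁻¹ * star ((Real.sqrt q : ℝ) : ℂ)⁻¹ = (q : ℂ)⁻¹ := by
    rw [Complex.star_def, ← Complex.ofReal_inv, Complex.conj_ofReal]
    rw [← Complex.ofReal_mul, ← mul_inv, Real.mul_self_sqrt (by positivity)]
    push_cast
    ring
  -- key lemma A: modulus of the Gauss-type sum
  have hkeyA : ∀ k m : ZMod q, k ≠ 0 →
      (∑ c : ZMod q, e (g2 k c + m * c)) * star (∑ d : ZMod q, e (g2 k d + m * d)) = q := by
    intro k m hk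
    rw [star_sum]
    rw [Finset.sum_mul_sum]
    have h1 : ∀ c d : ZMod q, e (g2 k c + m * c) * star (e (g2 k d + m * d)) =
        e ((g2 k c + m * c) - (g2 k d + m * d)) := by
      intro c d
      rw [he_star, ← he_add, sub_eq_add_neg]
    simp only [h1]
    rw [Finset.sum_comm]
    have h2 : ∀ d : ZMod q, ∑ c : ZMod q, e ((g2 k c + m * c) - (g2 k d + m * d)) =
        ∑ u : ZMod q, e (k * d * u + (g2 k u + m * u)) := by
      intro d
      refine (Fintype.sum_bijective (fun u : ZMod q => d + u) (Equiv.addLeft d).bijective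
        _ _ ?_).symm
      intro u
      congr 1
      rw [hg_add]
      ring
    simp only [h2]
    rw [Finset.sum_comm]
    have h3 : ∀ u : ZMod q, ∑ d : ZMod q, e (k * d * u + (g2 k u + m * u)) =
        e (g2 k u + m * u) * (if k * u = 0 then (q : ℂ) else 0) := by
      intro u
      rw [← hsum (k * u), Finset.mul_sum]
      refine Finset.sum_congr rfl fun d _ => ?_
      rw [← he_add]
      congr 1
      ring
    simp only [h3]
    have h4 : ∀ u : ZMod q, (if k * u = 0 then (q : ℂ) else 0) =
        if u = 0 then (q : ℂ) else 0 := by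
      intro u
      simp [mul_eq_zero, hk]
    simp only [h4, mul_ite, mul_zero]
    rw [Finset.sum_ite_eq' Finset.univ (0 : ZMod q) (fun u => e (g2 k u + m * u) * q)]
    simp [hg_zero, he_zero]
  -- key lemma B: the inner sum in orthogonality
  have hkeyB : ∀ (k k' a a' : ZMod q),
      ∑ b : ZMod q, V k (b - a) * star (V k' (b - a')) =
      ∑ c : ZMod q, e (g2 (k - k') c + (a' - a) * c) := by
    intro k k' a a'
    have expand : ∀ b : ZMod q, V k (b - a) * star (V k' (b - a')) =
        (q : ℂ)⁻¹ * ∑ c : ZMod q, ∑ d : ZMod q,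
          e ((g2 k c - g2 k' d - a * c + a' * d) + b * (c - d)) := by
      intro b
      rw [hV' k (b - a), hV' k' (b - a')]
      rw [star_mul', star_sum]
      rw [mul_mul_mul_comm, hc, Finset.sum_mul_sum]
      congr 1
      refine Finset.sum_congr rfl fun c _ => Finset.sum_congr rfl fun d _ => ?_
      rw [he_star, ← he_add]
      congr 1
      ring
    simp only [expand]
    rw [← Finset.mul_sum, Finset.sum_comm]
    have h2 : ∀ c : ZMod q, ∑ b : ZMod q, ∑ d : ZMod q,
        e ((g2 k c - g2 k' d - a * c + a' * d) + b * (c - d)) =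
        e (g2 (k - k') c + (a' - a) * c) * q := by
      intro c
      rw [Finset.sum_comm]
      have h3 : ∀ d : ZMod q, ∑ b : ZMod q,
          e ((g2 k c - g2 k' d - a * c + a' * d) + b * (c - d)) =
          e (g2 k c - g2 k' d - a * c + a' * d) * (if c - d = 0 then (q : ℂ) else 0) := by
        intro d
        rw [← hsum (c - d), Finset.mul_sum]
        exact Finset.sum_congr rfl fun b _ => (he_add _ _)
      simp only [h3]
      have h4 : ∀ d : ZMod q, (if c - d = 0 then (q : ℂ) else 0) =
          if d = c then (q : ℂ) else 0 := by
        intro d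
        simp [sub_eq_zero, eq_comm]
      simp only [h4, mul_ite, mul_zero]
      rw [Finset.sum_ite_eq' Finset.univ c
        (fun d => e (g2 k c - g2 k' d - a * c + a' * d) * q)]
      simp only [Finset.mem_univ, if_true]
      congr 2
      rw [← hg_sub]
      ring
    simp only [h2]
    rw [← Finset.sum_mul]
    field_simp
  constructor
  · -- modulus
    rintro ⟨i, a⟩ ⟨j, b⟩
    rw [hH, norm_mul, hKmod, one_mul]
    have hk : t j - s i ≠ 0 := sub_ne_zero.mpr (Ne.symm (hst i j))
    have h1 : V (t j - s i) (b - a) * star (V (t j - s i) (b - a)) = 1 := by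
      rw [hV']
      rw [star_mul', mul_mul_mul_comm, hc, hkeyA _ _ hk, inv_mul_cancel₀ hqC]
    have h2 : ‖V (t j - s i) (b - a)‖ ^ 2 = 1 := by
      rw [Complex.sq_norm, ← Complex.ofReal_eq_one, ← Complex.mul_conj, ← Complex.star_def, h1]
    have h3 := norm_nonneg (V (t j - s i) (b - a))
    nlinarith
  · -- orthogonality
    rintro ⟨i, a⟩ ⟨i', a'⟩
    rw [Fintype.sum_prod_type]
    have step : ∀ j : Fin N,
        ∑ b : ZMod q, H (i, a) (j, b) * star (H (i', a') (j, b)) =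
        (K i j * star (K i' j)) * ∑ c : ZMod q, e (g2 (s i' - s i) c + (a' - a) * c) := by
      intro j
      have h1 : ∀ b : ZMod q, H (i, a) (j, b) * star (H (i', a') (j, b)) =
          (K i j * star (K i' j)) * (V (t j - s i) (b - a) * star (V (t j - s i') (b - a'))) := by
        intro b
        rw [hH, hH, star_mul']
        ring
      simp only [h1]
      rw [← Finset.mul_sum, hkeyB]
      have h6 : t j - s i - (t j - s i') = s i' - s i := by ring
      rw [h6]
    simp only [step]
    rw [← Finset.sum_mul, hKorth]
    by_cases hii : i = i'
    · subst hii
      rw [if_pos rfl]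
      by_cases ha : a = a'
      · subst ha
        rw [if_pos rfl]
        have hC : ∑ c : ZMod q, e (g2 (s i - s i) c + (a - a) * c) = (q : ℂ) := by
          have h5 : ∀ c : ZMod q, g2 (s i - s i) c + (a - a) * c = c * 0 := by
            intro c; rw [sub_self, sub_self, hg_zero']; ring
          simp only [h5]
          rw [hsum]
          simp
        rw [hC]
        push_cast
        ring
      · rw [if_neg (by simp [ha])]
        have : ∑ c : ZMod q, e (g2 (s i - s i) c + (a' - a) * c) = 0 := by
          have h5 : ∀ c : ZMod q, g2 (s i - s i) c + (a' - a) * c = c * (a' - a) := by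
            intro c; rw [sub_self, hg_zero']; ring
          simp only [h5]
          rw [hsum, if_neg (sub_ne_zero.mpr (Ne.symm ha))]
        rw [this, mul_zero]
    · rw [if_neg hii, if_neg (by simp [hii]), zero_mul]
end

section
/- Let H ∈ M_{M×N}(ℂ) be a partial complex Hadamard matrix with rows H_1,…,H_M ∈ ℂ^N. For 1 ≤ i,j ≤ M let P_{ij} ∈ M_N(ℂ) be the orthogonal projection onto the line spanned by the vector H_i/H_j ∈ ℂ^N (whose k-th coordinate is H_{ik}·conj(H_{jk})), explicitly (P_{ij})_{kl} = (1/N)·H_{ik}·conj(H_{jk})·H_{jl}·conj(H_{il}). Then the matrix (P_{ij}) is submagic: each P_{ij} is a self-adjoint idempotent, and the projections are pairwise orthogonal along rows and columns, i.e. P_{ij}·P_{ik} = 0 whenever j ≠ k and P_{ij}·P_{kj} = 0 whenever i ≠ k. -/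
open Matrix

/-- for a partial complex Hadamard matrix `H ∈ M_{M×N}(ℂ)`, the rank-one
projections `(P_{ij})_{kl} = (1/N)·H_{ik}·conj(H_{jk})·H_{jl}·conj(H_{il})` (projections
onto the vectors `H_i/H_j`) form a submagic matrix: each `P_{ij}` is a self-adjoint
idempotent, and the projections are pairwise orthogonal along rows and columns. -/
theorem stmt_18 (M N : ℕ)
    (H : Matrix (Fin M) (Fin N) ℂ)
    (hmod : ∀ i j, ‖H i j‖ = 1)
    (horth : ∀ i j : Fin M, ∑ k, H i k * star (H j k) = if i = j then (N : ℂ) else 0)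
    (P : Fin M → Fin M → Matrix (Fin N) (Fin N) ℂ)
    (hP : ∀ (i j : Fin M) (k l : Fin N),
      P i j k l = (1 / (N : ℂ)) * (H i k * star (H j k) * (H j l * star (H i l)))) :
    (∀ i j : Fin M, (P i j)ᴴ = P i j) ∧
    (∀ i j : Fin M, P i j * P i j = P i j) ∧
    (∀ i j k : Fin M, j ≠ k → P i j * P i k = 0) ∧
    (∀ i j k : Fin M, i ≠ k → P i j * P k j = 0) := by
  have hone : ∀ (i : Fin M) (m : Fin N), H i m * star (H i m) = 1 := by
    intro i m
    rw [Complex.star_def, Complex.mul_conj]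
    norm_num [Complex.normSq_eq_norm_sq, hmod]
  refine ⟨?_, ?_, ?_, ?_⟩
  · intro i j
    ext k l
    simp only [conjTranspose_apply, hP, star_mul', star_star, star_div₀, star_one,
      star_natCast]
    ring
  · intro i j
    rcases Nat.eq_zero_or_pos N with hN | hN
    · subst hN
      ext k l
      exact k.elim0
    have hN' : (N : ℂ) ≠ 0 := by exact_mod_cast hN.ne'
    ext k l
    rw [mul_apply, hP]
    have hterm : ∀ m ∈ Finset.univ, P i j k m * P i j m l =
        (1 / (N : ℂ))^2 * (H i k * star (H j k) * (H j l * star (H i l))) := by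
      intro m _
      rw [hP, hP]
      linear_combination ((1 / (N : ℂ))^2 * (H i k * star (H j k) * (H j l * star (H i l)))) *
        ((H i m * star (H i m)) * hone j m + hone i m)
    rw [Finset.sum_congr rfl hterm, Finset.sum_const, Finset.card_univ, Fintype.card_fin,
      nsmul_eq_mul]
    field_simp
  · intro i j c hjc
    ext k l
    rw [mul_apply]
    have hterm : ∀ m ∈ Finset.univ, P i j k m * P i c m l =
        ((1 / (N : ℂ))^2 * (H i k * star (H j k) * (H c l * star (H i l)))) *
          (H j m * star (H c m)) := by
      intro m _
      rw [hP, hP]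
      linear_combination ((1 / (N : ℂ))^2 * (H i k * star (H j k) * (H c l * star (H i l)))
        * (H j m * star (H c m))) * hone i m
    rw [Finset.sum_congr rfl hterm, ← Finset.mul_sum, horth j c, if_neg hjc, mul_zero]
    simp
  · intro i j c hic
    ext k l
    rw [mul_apply]
    have hterm : ∀ m ∈ Finset.univ, P i j k m * P c j m l =
        ((1 / (N : ℂ))^2 * (H i k * star (H j k) * (H j l * star (H c l)))) *
          (H c m * star (H i m)) := by
      intro m _
      rw [hP, hP]
      linear_combination ((1 / (N : ℂ))^2 * (H i k * star (H j k) * (H j l * star (H c l)))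
        * (H c m * star (H i m))) * hone j m
    rw [Finset.sum_congr rfl hterm, ← Finset.mul_sum, horth c i, if_neg (Ne.symm hic), mul_zero]
    simp
end

section
/- Let H ∈ M_{2×N}(ℂ) be a partial complex Hadamard matrix in dephased form, with first row (1,…,1) and second row λ = (λ_1,…,λ_N) where |λ_i| = 1 for all i (so that ∑_{i=1}^N λ_i = 0). For i,j ∈ {1,2} let P_{ij} ∈ M_N(ℂ) be the orthogonal projection onto the span of the vector H_i/H_j, explicitly (P_{ij})_{kl} = (1/N)·H_{ik}·conj(H_{jk})·H_{jl}·conj(H_{il}). Then the four projections P_{11}, P_{12}, P_{21}, P_{22} pairwise commute if and only if either (1) there exists w ∈ ℂ with |w| = 1 such that λ_i ∈ {w, −w} for every i, or (2) ∑_{i=1}^N λ_i² = 0. -/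
/-- for a dephased `2×N` partial complex Hadamard matrix with rows
`(1,…,1)` and `λ = (λ_1,…,λ_N)`, the four projections
`(P_{ij})_{kl} = (1/N)·H_{ik}·conj(H_{jk})·H_{jl}·conj(H_{il})` pairwise commute
iff either `λ_i ∈ {w, −w}` for some fixed `w ∈ 𝕋`, or `∑_i λ_i² = 0`. -/
theorem stmt_19 (N : ℕ)
    (lam : Fin N → ℂ)
    (hmod : ∀ i, ‖lam i‖ = 1)
    (H : Matrix (Fin 2) (Fin N) ℂ)
    (hH0 : ∀ k, H 0 k = 1)
    (hH1 : ∀ k, H 1 k = lam k)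
    (horth : ∀ i j : Fin 2, ∑ k, H i k * star (H j k) = if i = j then (N : ℂ) else 0)
    (P : Fin 2 → Fin 2 → Matrix (Fin N) (Fin N) ℂ)
    (hP : ∀ (i j : Fin 2) (k l : Fin N),
      P i j k l = (1 / (N : ℂ)) * (H i k * star (H j k) * (H j l * star (H i l)))) :
    (∀ i j k l : Fin 2, P i j * P k l = P k l * P i j) ↔
      ((∃ w : ℂ, ‖w‖ = 1 ∧ ∀ i, lam i = w ∨ lam i = -w) ∨
        ∑ i, (lam i) ^ 2 = 0) := by
  rcases Nat.eq_zero_or_pos N with hN0 | hNpos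
  · subst hN0
    constructor
    · intro _; exact Or.inr (by simp)
    · intro _ i j k l
      ext a b
      exact a.elim0
  have hNne : (N : ℂ) ≠ 0 := Nat.cast_ne_zero.mpr hNpos.ne'
  have hu : ∀ i, lam i * star (lam i) = 1 := fun i => by
    rw [Complex.star_def, Complex.mul_conj, Complex.normSq_eq_norm_sq, hmod]
    norm_num
  have hsum : ∑ m, lam m = 0 := by
    simpa [hH0, hH1, show (1 : Fin 2) ≠ 0 from by decide] using horth 1 0
  have hsumc : ∑ m, star (lam m) = 0 := by
    simpa [hH0, hH1, show (0 : Fin 2) ≠ 1 from by decide] using horth 0 1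
  set s : ℂ := ∑ i, (lam i) ^ 2 with hs_def
  have hstars : star s = ∑ m, (star (lam m)) ^ 2 := by
    rw [hs_def, star_sum]
    simp only [star_pow]
  -- entry formulas for the two nontrivial products
  have hBC : ∀ k l, (P 1 0 * P 0 1) k l = (1/(N:ℂ))^2 * (lam k * lam l) * star s := by
    intro k l
    rw [Matrix.mul_apply]
    have h1 : ∀ m : Fin N, P 1 0 k m * P 0 1 m l
        = ((1/(N:ℂ))^2 * (lam k * lam l)) * (star (lam m))^2 := by
      intro m
      simp only [hP, hH0, hH1, star_one, mul_one, one_mul]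
      ring
    rw [Finset.sum_congr rfl fun m _ => h1 m, ← Finset.mul_sum, ← hstars]
  have hCB : ∀ k l, (P 0 1 * P 1 0) k l
      = (1/(N:ℂ))^2 * (star (lam k) * star (lam l)) * s := by
    intro k l
    rw [Matrix.mul_apply]
    have h1 : ∀ m : Fin N, P 0 1 k m * P 1 0 m l
        = ((1/(N:ℂ))^2 * (star (lam k) * star (lam l))) * (lam m)^2 := by
      intro m
      simp only [hP, hH0, hH1, star_one, mul_one, one_mul]
      ring
    rw [Finset.sum_congr rfl fun m _ => h1 m, ← Finset.mul_sum, ← hs_def]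
  -- products with P 0 0 vanish
  have zAB : P 0 0 * P 1 0 = 0 := by
    ext k l
    rw [Matrix.mul_apply]
    have h1 : ∀ m : Fin N, P 0 0 k m * P 1 0 m l
        = ((1/(N:ℂ))^2 * star (lam l)) * lam m := by
      intro m
      simp only [hP, hH0, hH1, star_one, mul_one, one_mul]
      ring
    rw [Finset.sum_congr rfl fun m _ => h1 m, ← Finset.mul_sum, hsum, mul_zero,
      Matrix.zero_apply]
  have zBA : P 1 0 * P 0 0 = 0 := by
    ext k l
    rw [Matrix.mul_apply]
    have h1 : ∀ m : Fin N, P 1 0 k m * P 0 0 m l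
        = ((1/(N:ℂ))^2 * lam k) * star (lam m) := by
      intro m
      simp only [hP, hH0, hH1, star_one, mul_one, one_mul]
      ring
    rw [Finset.sum_congr rfl fun m _ => h1 m, ← Finset.mul_sum, hsumc, mul_zero,
      Matrix.zero_apply]
  have zAC : P 0 0 * P 0 1 = 0 := by
    ext k l
    rw [Matrix.mul_apply]
    have h1 : ∀ m : Fin N, P 0 0 k m * P 0 1 m l
        = ((1/(N:ℂ))^2 * lam l) * star (lam m) := by
      intro m
      simp only [hP, hH0, hH1, star_one, mul_one, one_mul]
      ring
    rw [Finset.sum_congr rfl fun m _ => h1 m, ← Finset.mul_sum, hsumc, mul_zero,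
      Matrix.zero_apply]
  have zCA : P 0 1 * P 0 0 = 0 := by
    ext k l
    rw [Matrix.mul_apply]
    have h1 : ∀ m : Fin N, P 0 1 k m * P 0 0 m l
        = ((1/(N:ℂ))^2 * star (lam k)) * lam m := by
      intro m
      simp only [hP, hH0, hH1, star_one, mul_one, one_mul]
      ring
    rw [Finset.sum_congr rfl fun m _ => h1 m, ← Finset.mul_sum, hsum, mul_zero,
      Matrix.zero_apply]
  have hP11 : P 1 1 = P 0 0 := by
    ext k l
    simp only [hP, hH0, hH1, star_one, mul_one, one_mul]
    rw [hu k, hu l]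
    ring
  set k0 : Fin N := ⟨0, hNpos⟩ with hk0
  constructor
  · -- forward direction
    intro h
    have key := h 1 0 0 1
    have hC : ∀ k l, lam k * lam l * star s = star (lam k) * star (lam l) * s := by
      intro k l
      have hkl := congrFun (congrFun key k) l
      rw [hBC, hCB] at hkl
      have hkl' : (1/(N:ℂ))^2 * (lam k * lam l * star s)
          = (1/(N:ℂ))^2 * (star (lam k) * star (lam l) * s) := by
        linear_combination hkl
      exact mul_left_cancel₀ (pow_ne_zero 2 (one_div_ne_zero hNne)) hkl'
    by_cases hs0 : s = 0
    · exact Or.inr hs0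
    · left
      refine ⟨lam k0, hmod k0, fun i => ?_⟩
      have hg : star s ≠ 0 := star_ne_zero.mpr hs0
      have hw0 : lam k0 ≠ 0 := fun h0 => by simpa [h0] using hmod k0
      have e1 := hC i k0
      have e2 := hC k0 k0
      have h3 : star s * (lam i ^ 2 * lam k0 ^ 2) = s := by
        linear_combination (lam i * lam k0) * e1 + s * lam k0 * star (lam k0) * hu i
          + s * hu k0
      have h4 : star s * (lam k0 ^ 2 * lam k0 ^ 2) = s := by
        linear_combination (lam k0 ^ 2) * e2 + s * (lam k0 * star (lam k0) + 1) * hu k0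
      have h5 : (star s * lam k0 ^ 2) * (lam i ^ 2 - lam k0 ^ 2) = 0 := by
        linear_combination h3 - h4
      have h6 : lam i ^ 2 - lam k0 ^ 2 = 0 := by
        rcases mul_eq_zero.mp h5 with h6 | h6
        · rcases mul_eq_zero.mp h6 with h7 | h7
          · exact absurd h7 hg
          · exact absurd h7 (pow_ne_zero 2 hw0)
        · exact h6
      have h7 : (lam i - lam k0) * (lam i + lam k0) = 0 := by linear_combination h6
      rcases mul_eq_zero.mp h7 with h8 | h8
      · exact Or.inl (sub_eq_zero.mp h8)
      · exact Or.inr (eq_neg_of_add_eq_zero_left h8)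
  · -- backward direction
    intro h i j k l
    have cBC : P 1 0 * P 0 1 = P 0 1 * P 1 0 := by
      ext k l
      rw [hBC, hCB]
      rcases h with ⟨w, hwabs, hw⟩ | hs0
      · have hsw : s = N * w ^ 2 := by
          rw [hs_def]
          calc ∑ i, lam i ^ 2 = ∑ _i : Fin N, w ^ 2 :=
                Finset.sum_congr rfl (fun i _ => by rcases hw i with h'|h' <;> rw [h'] <;> ring)
            _ = N * w ^ 2 := by
                simp [Finset.sum_const, mul_comm]
        have hsws : star s = (N : ℂ) * (star w) ^ 2 := by
          rw [hsw, star_mul', star_pow, star_natCast]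
        rcases hw k with hk | hk <;> rcases hw l with hl | hl <;>
          simp only [hk, hl, hsw, star_mul', star_pow, star_natCast, star_neg] <;> ring
      · rw [hs0]
        simp
    have hPcase : ∀ a b : Fin 2, P a b = P 0 0 ∨ P a b = P 1 0 ∨ P a b = P 0 1 := by
      intro a b
      fin_cases a <;> fin_cases b
      · exact Or.inl rfl
      · exact Or.inr (Or.inr rfl)
      · exact Or.inr (Or.inl rfl)
      · exact Or.inl hP11
    rcases hPcase i j with h1 | h1 | h1 <;> rcases hPcase k l with h2 | h2 | h2 <;>
      rw [h1, h2] <;>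
      first
        | rfl
        | exact cBC
        | exact cBC.symm
        | rw [zAB, zBA]
        | rw [zBA, zAB]
        | rw [zAC, zCA]
        | rw [zCA, zAC]
end
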